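/- arXiv:2110.03801 — 5 statements merged into one kernel-verified Lean document; each statement's English description precedes it below -/
import Mathlib

section
/- Let M, N ≥ 1 be integers, let a_b ∈ ℂ^M be nonzero, let h_d ∈ ℂ^M satisfy a_b^H h_d ≠ 0, let w ∈ ℂ^N, and let c > 0. Then sup over φ ∈ ℝ^N of ‖h_d + c·(∑_{n=1}^N e^{iφ_n} w_n)·a_b‖₂² equals ‖h_d‖₂² + 2c·(∑_{n=1}^N |w_n|)·|a_b^H h_d| + c²·‖a_b‖₂²·(∑_{n=1}^N |w_n|)², and this supremum is attained at the phase choice φ_n = arg(a_b^H h_d) − arg(w_n). -/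
open Complex

noncomputable section

/-- Squared Euclidean norm of a complex vector. -/
def cnormSq {m : ℕ} (v : Fin m → ℂ) : ℝ := ∑ i, ‖v i‖ ^ 2

/-- Hermitian inner product `a^H b`. -/
def dotH {m : ℕ} (a b : Fin m → ℂ) : ℂ := ∑ i, (starRingEnd ℂ) (a i) * b i

lemma cnormSq_expand {M : ℕ} (a_b h_d : Fin M → ℂ) (z : ℂ) :
    cnormSq (fun m => h_d m + z * a_b m)
      = cnormSq h_d + Complex.normSq z * cnormSq a_b
        + 2 * (z * (starRingEnd ℂ) (dotH a_b h_d)).re := by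
  simp only [cnormSq, Complex.sq_norm, Complex.normSq_add, dotH]
  rw [Finset.sum_add_distrib, Finset.sum_add_distrib]
  congr 1
  · congr 1
    simp [Complex.normSq_mul, Finset.mul_sum]
  · rw [map_sum, Finset.mul_sum, Complex.re_sum, Finset.mul_sum]
    refine Finset.sum_congr rfl fun x _ => ?_
    congr 1
    rw [← Complex.conj_re (z * (starRingEnd ℂ) ((starRingEnd ℂ) (a_b x) * h_d x))]
    congr 1
    simp only [map_mul, RingHomCompTriple.comp_apply, RingHom.id_apply]
    ring

lemma cnormSq_nonneg {M : ℕ} (v : Fin M → ℂ) : 0 ≤ cnormSq v :=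
  Finset.sum_nonneg fun i _ => sq_nonneg _

/-- Optimal RIS phase configuration: the SNR `‖h_d + c (∑ₙ e^{iφₙ} wₙ) a_b‖₂²` over phase
vectors `φ ∈ ℝ^N` has supremum
`‖h_d‖₂² + 2c (∑ₙ |wₙ|) |a_b^H h_d| + c² ‖a_b‖₂² (∑ₙ |wₙ|)²`, attained at
`φₙ = arg(a_b^H h_d) - arg(wₙ)`. -/
theorem optimal_ris_phases (M N : ℕ) (hM : 1 ≤ M) (hN : 1 ≤ N)
    (a_b : Fin M → ℂ) (hab : a_b ≠ 0)
    (h_d : Fin M → ℂ) (hd : dotH a_b h_d ≠ 0)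
    (w : Fin N → ℂ) (c : ℝ) (hc : 0 < c) :
    IsGreatest
      (Set.range (fun φ : Fin N → ℝ =>
        cnormSq (fun m =>
          h_d m + (c : ℂ) * (∑ n, Complex.exp (Complex.I * (φ n : ℂ)) * w n) * a_b m)))
      (cnormSq h_d + 2 * c * (∑ n, ‖w n‖) * ‖dotH a_b h_d‖
        + c ^ 2 * cnormSq a_b * (∑ n, ‖w n‖) ^ 2) ∧
    cnormSq (fun m =>
        h_d m + (c : ℂ) *
          (∑ n, Complex.exp (Complex.I * (((dotH a_b h_d).arg - (w n).arg : ℝ) : ℂ)) * w n)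
          * a_b m)
      = cnormSq h_d + 2 * c * (∑ n, ‖w n‖) * ‖dotH a_b h_d‖
        + c ^ 2 * cnormSq a_b * (∑ n, ‖w n‖) ^ 2 := by
  set D := dotH a_b h_d with hD
  set T : ℝ := ∑ n, ‖w n‖ with hT
  have hT0 : 0 ≤ T := Finset.sum_nonneg fun n _ => norm_nonneg _
  -- the optimal sum
  have hsum : (∑ n, Complex.exp (Complex.I * ((D.arg - (w n).arg : ℝ) : ℂ)) * w n)
      = Complex.exp (Complex.I * (D.arg : ℂ)) * (T : ℂ) := by
    rw [hT, Complex.ofReal_sum, Finset.mul_sum]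
    refine Finset.sum_congr rfl fun n _ => ?_
    have h : Complex.exp (Complex.I * ((D.arg - (w n).arg : ℝ) : ℂ))
        = Complex.exp (Complex.I * (D.arg : ℂ))
          * Complex.exp (-(Complex.I * ((w n).arg : ℂ))) := by
      rw [Complex.ofReal_sub, mul_sub, Complex.exp_sub, div_eq_mul_inv, ← Complex.exp_neg]
    rw [h, mul_assoc]
    congr 1
    nth_rewrite 2 [← Complex.norm_mul_exp_arg_mul_I (w n)]
    rw [show -(Complex.I * ((w n).arg : ℂ)) = -(((w n).arg : ℂ) * Complex.I) from by ring,
      mul_comm (Complex.exp _), mul_assoc, ← Complex.exp_add, add_neg_cancel,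
      Complex.exp_zero, mul_one]
  -- value at a given z
  have key : ∀ z : ℂ, cnormSq (fun m => h_d m + z * a_b m)
      = cnormSq h_d + Complex.normSq z * cnormSq a_b + 2 * (z * (starRingEnd ℂ) D).re :=
    fun z => cnormSq_expand a_b h_d z
  -- value at optimum
  have hopt : ∀ S : ℂ, S = Complex.exp (Complex.I * (D.arg : ℂ)) * (T : ℂ) →
      cnormSq (fun m => h_d m + (c : ℂ) * S * a_b m)
        = cnormSq h_d + 2 * c * T * ‖D‖ + c ^ 2 * cnormSq a_b * T ^ 2 := by
    intro S hS
    rw [key, hS]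
    have h1 : Complex.normSq ((c : ℂ) * (Complex.exp (Complex.I * (D.arg : ℂ)) * (T : ℂ)))
        = c ^ 2 * T ^ 2 := by
      rw [Complex.normSq_eq_norm_sq]
      simp only [norm_mul, Complex.norm_real, Real.norm_eq_abs, mul_comm Complex.I,
        Complex.norm_exp_ofReal_mul_I]
      rw [_root_.abs_of_pos hc, _root_.abs_of_nonneg hT0]
      ring
    have h2 : ((c : ℂ) * (Complex.exp (Complex.I * (D.arg : ℂ)) * (T : ℂ))
        * (starRingEnd ℂ) D).re = c * T * ‖D‖ := by
      have : Complex.exp (Complex.I * (D.arg : ℂ)) * (starRingEnd ℂ) D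
          = (‖D‖ : ℂ) := by
        conv_lhs => rw [show (starRingEnd ℂ) D
          = (starRingEnd ℂ) ((‖D‖ : ℂ) * Complex.exp ((D.arg : ℂ) * Complex.I))
          from by rw [Complex.norm_mul_exp_arg_mul_I]]
        rw [map_mul, ← Complex.exp_conj]
        simp only [map_mul, Complex.conj_ofReal, ← Complex.exp_conj, map_neg,
          Complex.conj_I, mul_neg, mul_comm Complex.I]
        rw [mul_comm, mul_assoc, ← Complex.exp_add]
        simp
      calc ((c : ℂ) * (Complex.exp (Complex.I * (D.arg : ℂ)) * (T : ℂ))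
              * (starRingEnd ℂ) D).re
          = ((c : ℂ) * (T : ℂ) * (Complex.exp (Complex.I * (D.arg : ℂ))
              * (starRingEnd ℂ) D)).re := by ring_nf
        _ = ((c : ℂ) * (T : ℂ) * (‖D‖ : ℂ)).re := by rw [this]
        _ = c * T * ‖D‖ := by
              norm_cast
    rw [h1, h2]
    ring
  constructor
  · constructor
    · exact ⟨fun n => D.arg - (w n).arg, by
        simp only []
        rw [show (fun m => h_d m + (c : ℂ)
            * (∑ n, Complex.exp (Complex.I * (((D.arg - (w n).arg : ℝ)) : ℂ)) * w n) * a_b m)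
          = fun m => h_d m + (c : ℂ)
            * (Complex.exp (Complex.I * (D.arg : ℂ)) * (T : ℂ)) * a_b m from by
          funext m; rw [hsum]]
        exact hopt _ rfl⟩
    · rintro x ⟨φ, rfl⟩
      set S : ℂ := ∑ n, Complex.exp (Complex.I * (φ n : ℂ)) * w n with hS
      have habsS : ‖S‖ ≤ T := by
        refine le_trans (norm_sum_le _ _) ?_
        rw [hT]
        refine Finset.sum_le_sum fun n _ => ?_
        rw [norm_mul]
        have : ‖Complex.exp (Complex.I * (φ n : ℂ))‖ = 1 := by
          rw [mul_comm, Complex.norm_exp_ofReal_mul_I]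
        rw [this, one_mul]
      have hre : (((c : ℂ) * S) * (starRingEnd ℂ) D).re ≤ c * T * ‖D‖ := by
        calc (((c : ℂ) * S) * (starRingEnd ℂ) D).re
            ≤ ‖((c : ℂ) * S) * (starRingEnd ℂ) D‖ := Complex.re_le_norm _
          _ = c * ‖S‖ * ‖D‖ := by
              simp [norm_mul, Complex.norm_conj, abs_of_pos hc]
          _ ≤ c * T * ‖D‖ := by
              have := mul_le_mul_of_nonneg_left habsS (le_of_lt hc)
              exact mul_le_mul_of_nonneg_right this (norm_nonneg _)
      have hsq : Complex.normSq ((c : ℂ) * S) ≤ c ^ 2 * T ^ 2 := by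
        rw [Complex.normSq_mul, Complex.normSq_eq_norm_sq, Complex.normSq_eq_norm_sq]
        simp only [Complex.norm_real, Real.norm_eq_abs, abs_of_pos hc]
        have : ‖S‖ ^ 2 ≤ T ^ 2 :=
          pow_le_pow_left₀ (norm_nonneg _) habsS 2
        nlinarith [sq_nonneg c]
      show cnormSq (fun m => h_d m + (c : ℂ) * S * a_b m)
          ≤ cnormSq h_d + 2 * c * T * ‖D‖ + c ^ 2 * cnormSq a_b * T ^ 2
      rw [key]
      have h3 : Complex.normSq ((c : ℂ) * S) * cnormSq a_b
          ≤ c ^ 2 * T ^ 2 * cnormSq a_b :=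
        mul_le_mul_of_nonneg_right hsq (cnormSq_nonneg a_b)
      nlinarith [hre]
  · rw [show (fun m => h_d m + (c : ℂ)
        * (∑ n, Complex.exp (Complex.I * (((D.arg - (w n).arg : ℝ)) : ℂ)) * w n) * a_b m)
      = fun m => h_d m + (c : ℂ)
        * (Complex.exp (Complex.I * (D.arg : ℂ)) * (T : ℂ)) * a_b m from by
      funext m; rw [hsum]]
    exact hopt _ rfl
end
end

section
/- For every real α > 0, L(α·x)/√(1+x) → 2·√(α/π) as x → ∞. -/
noncomputable section

/-- Laguerre function `L(z) = L_{1/2}(-z) = ₁F₁(-1/2;1;-z)`. -/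
def Lhalf (z : ℝ) : ℝ :=
  ∑' n : ℕ, (ascPochhammer ℝ n).eval (-(1/2)) / ((n.factorial : ℝ))^2 * (-z) ^ n

open Filter

namespace QAux
open MeasureTheory Real Set Topology

/-- Pochhammer `(1/2)_n`. -/
def P (n : ℕ) : ℝ := (ascPochhammer ℝ n).eval (1/2)

/-- Pochhammer `(-1/2)_n`. -/
def A (n : ℕ) : ℝ := (ascPochhammer ℝ n).eval (-(1/2))

lemma P_zero : P 0 = 1 := by simp [P]

lemma A_zero : A 0 = 1 := by simp [A]

lemma P_succ (n : ℕ) : P (n + 1) = P n * (1/2 + n) := by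
  rw [P, P, ascPochhammer_succ_right]
  simp [Polynomial.eval_mul]

lemma A_succ (n : ℕ) : A (n + 1) = -(1/2) * P n := by
  rw [A, P, ascPochhammer_succ_left]
  simp only [Polynomial.eval_mul, Polynomial.eval_X, Polynomial.eval_comp, Polynomial.eval_add,
    Polynomial.eval_one]
  norm_num

lemma P_nonneg (n : ℕ) : 0 ≤ P n := by
  induction n with
  | zero => simp [P_zero]
  | succ n ih => rw [P_succ]; positivity

lemma P_le_factorial (n : ℕ) : P n ≤ n.factorial := by
  induction n with
  | zero => simp [P_zero]
  | succ n ih =>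
    rw [P_succ, Nat.factorial_succ]
    push_cast
    calc P n * (1/2 + n) ≤ (n.factorial : ℝ) * (n + 1) := by
          apply mul_le_mul ih (by linarith) (by positivity) (by positivity)
      _ = ((n:ℝ) + 1) * n.factorial := by ring

lemma A_abs_le_factorial (n : ℕ) : |A n| ≤ n.factorial := by
  cases n with
  | zero => simp [A_zero]
  | succ n =>
    rw [A_succ, Nat.factorial_succ, abs_mul, abs_of_nonneg (P_nonneg n)]
    have h1 : |(-(1/2):ℝ)| = 1/2 := by rw [abs_neg, abs_of_nonneg] <;> norm_num
    rw [h1]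
    push_cast
    nlinarith [P_le_factorial n, P_nonneg n, (show (0:ℝ) ≤ n.factorial by positivity),
      (show (0:ℝ) ≤ (n:ℝ) from n.cast_nonneg)]

/-- `Γ(n + 1/2) = (1/2)_n √π`. -/
lemma Gamma_nat_add_half (n : ℕ) : Real.Gamma (n + 1/2) = P n * Real.sqrt π := by
  induction n with
  | zero =>
    rw [Nat.cast_zero, zero_add, Real.Gamma_one_half_eq, P_zero, one_mul]
  | succ n ih =>
    have h : ((n:ℝ) + 1) + 1/2 = ((n:ℝ) + 1/2) + 1 := by ring
    push_cast
    rw [h, Real.Gamma_add_one (by positivity), ih, P_succ]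
    ring

/-- Real Beta integral in terms of Gamma functions. -/
lemma realBeta {a b : ℝ} (ha : 0 < a) (hb : 0 < b) :
    ∫ t in Ioo (0:ℝ) 1, t ^ (a-1) * (1-t) ^ (b-1) =
      Real.Gamma a * Real.Gamma b / Real.Gamma (a+b) := by
  have key : Complex.betaIntegral a b =
      ((∫ t in Ioo (0:ℝ) 1, t ^ (a-1) * (1-t) ^ (b-1) : ℝ) : ℂ) := by
    rw [Complex.betaIntegral, intervalIntegral.integral_of_le zero_le_one,
      MeasureTheory.integral_Ioc_eq_integral_Ioo]
    have hcong : ∀ t ∈ Ioo (0:ℝ) 1,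
        (t:ℂ) ^ ((a:ℂ)-1) * ((1:ℂ)-t) ^ ((b:ℂ)-1)
          = ((t ^ (a-1) * (1-t) ^ (b-1) : ℝ) : ℂ) := by
      intro t ht
      have h1 : (0:ℝ) ≤ t := ht.1.le
      have h2 : (0:ℝ) ≤ 1 - t := by linarith [ht.2]
      rw [Complex.ofReal_mul, Complex.ofReal_cpow h1, Complex.ofReal_cpow h2]
      push_cast
      ring
    rw [setIntegral_congr_fun measurableSet_Ioo hcong]
    have cc : ∀ r : ℝ, Complex.ofReal r = @RCLike.ofReal ℂ _ r := fun r => rfl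
    conv_lhs => enter [2, t]; rw [cc]
    rw [_root_.integral_ofReal, ← cc]
  have hG := Complex.Gamma_mul_Gamma_eq_betaIntegral
    (by simpa using ha : 0 < (a:ℂ).re) (by simpa using hb : 0 < (b:ℂ).re)
  rw [key] at hG
  have hab : (a:ℂ) + b = ((a+b : ℝ) : ℂ) := by push_cast; ring
  rw [hab, Complex.Gamma_ofReal, Complex.Gamma_ofReal, Complex.Gamma_ofReal] at hG
  have hG' : Real.Gamma a * Real.Gamma b
      = Real.Gamma (a+b) * ∫ t in Ioo (0:ℝ) 1, t ^ (a-1) * (1-t) ^ (b-1) := by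
    exact_mod_cast hG
  have hne : Real.Gamma (a+b) ≠ 0 := (Real.Gamma_pos_of_pos (by linarith)).ne'
  field_simp [hne] at hG' ⊢
  linarith [hG']

/-- weight `t^(-1/2) (1-t)^(-1/2)`, extended by zero outside `(0,1)`. -/
def w1 (t : ℝ) : ℝ := 1 / (Real.sqrt t * Real.sqrt (1 - t))

/-- weight `t^(-1/2) (1-t)^(1/2)`, extended by zero outside `(0,1)`. -/
def w2 (t : ℝ) : ℝ := Real.sqrt (1 - t) / Real.sqrt t

lemma w1_nonneg (t : ℝ) : 0 ≤ w1 t := by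
  unfold w1; positivity

lemma w2_nonneg (t : ℝ) : 0 ≤ w2 t := by
  unfold w2; positivity

lemma measurable_w1 : Measurable w1 := by
  unfold w1; fun_prop

lemma measurable_w2 : Measurable w2 := by
  unfold w2; fun_prop

lemma beta1 (n : ℕ) :
    ∫ t in Ioo (0:ℝ) 1, t ^ n * w1 t = π * (P n / n.factorial) := by
  have h : ∫ t in Ioo (0:ℝ) 1, t ^ n * w1 t
      = ∫ t in Ioo (0:ℝ) 1, t ^ (((n:ℝ) + 1/2) - 1) * (1-t) ^ ((1/2:ℝ) - 1) := by
    refine (setIntegral_congr_fun measurableSet_Ioo fun t ht => ?_).symm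
    have h1 : (0:ℝ) < t := ht.1
    have h2 : (0:ℝ) < 1 - t := by linarith [ht.2]
    have e1 : t ^ (((n:ℝ) + 1/2) - 1) = t ^ n * (Real.sqrt t)⁻¹ := by
      rw [show ((n:ℝ) + 1/2) - 1 = (n:ℝ) + (-(1/2)) by ring, rpow_add h1, rpow_natCast,
        rpow_neg h1.le, sqrt_eq_rpow]
    have e2 : (1-t) ^ ((1/2:ℝ) - 1) = (Real.sqrt (1-t))⁻¹ := by
      rw [show (1/2:ℝ) - 1 = -(1/2) by ring, rpow_neg h2.le, sqrt_eq_rpow]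
    rw [e1, e2, w1, one_div, mul_inv]
    ring
  rw [h, realBeta (by positivity) (by norm_num), Gamma_nat_add_half, Real.Gamma_one_half_eq,
    show (n:ℝ) + 1/2 + 1/2 = (n:ℝ) + 1 by ring, Real.Gamma_nat_eq_factorial]
  rw [show P n * Real.sqrt π * Real.sqrt π / (n.factorial:ℝ)
      = P n * (Real.sqrt π * Real.sqrt π) / (n.factorial:ℝ) by ring,
    Real.mul_self_sqrt pi_pos.le]
  ring

lemma beta2 (n : ℕ) :
    ∫ t in Ioo (0:ℝ) 1, t ^ n * w2 t = π * (P n / (2 * (n+1).factorial)) := by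
  have h : ∫ t in Ioo (0:ℝ) 1, t ^ n * w2 t
      = ∫ t in Ioo (0:ℝ) 1, t ^ (((n:ℝ) + 1/2) - 1) * (1-t) ^ ((3/2:ℝ) - 1) := by
    refine (setIntegral_congr_fun measurableSet_Ioo fun t ht => ?_).symm
    have h1 : (0:ℝ) < t := ht.1
    have h2 : (0:ℝ) < 1 - t := by linarith [ht.2]
    have e1 : t ^ (((n:ℝ) + 1/2) - 1) = t ^ n * (Real.sqrt t)⁻¹ := by
      rw [show ((n:ℝ) + 1/2) - 1 = (n:ℝ) + (-(1/2)) by ring, rpow_add h1, rpow_natCast,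
        rpow_neg h1.le, sqrt_eq_rpow]
    have e2 : (1-t) ^ ((3/2:ℝ) - 1) = Real.sqrt (1-t) := by
      rw [show (3/2:ℝ) - 1 = 1/2 by ring, sqrt_eq_rpow]
    rw [e1, e2, w2, div_eq_mul_inv]
    ring
  have hG32 : Real.Gamma (3/2) = Real.sqrt π / 2 := by
    rw [show (3/2:ℝ) = 1/2 + 1 by ring, Real.Gamma_add_one (by norm_num),
      Real.Gamma_one_half_eq]
    ring
  have hfac : Real.Gamma ((n:ℝ) + 1/2 + 3/2) = ((n+1).factorial : ℝ) := by
    rw [show (n:ℝ) + 1/2 + 3/2 = ((n+1 : ℕ):ℝ) + 1 by push_cast; ring,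
      Real.Gamma_nat_eq_factorial]
  rw [h, realBeta (by positivity) (by norm_num), Gamma_nat_add_half, hG32, hfac]
  rw [show P n * Real.sqrt π * (Real.sqrt π / 2) / ((n+1).factorial:ℝ)
      = P n * (Real.sqrt π * Real.sqrt π) / (2 * ((n+1).factorial:ℝ)) by ring,
    Real.mul_self_sqrt pi_pos.le]
  ring

lemma integrableOn_beta_integrand {a b : ℝ} (ha : 0 < a) (hb : 0 < b) :
    IntegrableOn (fun t => t ^ (a-1) * (1-t) ^ (b-1)) (Ioo (0:ℝ) 1) := by
  have hc := (Complex.betaIntegral_convergent (u := a) (v := b)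
    (by simpa using ha) (by simpa using hb)).norm
  rw [intervalIntegrable_iff_integrableOn_Ioc_of_le zero_le_one] at hc
  refine (hc.mono_set Ioo_subset_Ioc_self).congr_fun ?_ measurableSet_Ioo
  intro t ht
  have h1 : (0:ℝ) ≤ t := ht.1.le
  have h2 : (0:ℝ) ≤ 1 - t := by linarith [ht.2]
  have e1 : (t:ℂ) ^ ((a:ℂ)-1) = ((t ^ (a-1) : ℝ) : ℂ) := by
    rw [Complex.ofReal_cpow h1]; push_cast; ring_nf
  have e2 : ((1:ℂ)-(t:ℂ)) ^ ((b:ℂ)-1) = (((1-t) ^ (b-1) : ℝ) : ℂ) := by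
    rw [Complex.ofReal_cpow h2]; push_cast; ring_nf
  show ‖(t:ℂ) ^ ((a:ℂ)-1) * ((1:ℂ)-(t:ℂ)) ^ ((b:ℂ)-1)‖ = t ^ (a-1) * (1-t) ^ (b-1)
  rw [e1, e2, ← Complex.ofReal_mul, Complex.norm_real]
  exact abs_of_nonneg (by positivity)

lemma integrand_eq1 (n : ℕ) {t : ℝ} (ht : t ∈ Ioo (0:ℝ) 1) :
    t ^ (((n:ℝ) + 1/2) - 1) * (1-t) ^ ((1/2:ℝ) - 1) = t ^ n * w1 t := by
  have h1 : (0:ℝ) < t := ht.1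
  have h2 : (0:ℝ) < 1 - t := by linarith [ht.2]
  have e1 : t ^ (((n:ℝ) + 1/2) - 1) = t ^ n * (Real.sqrt t)⁻¹ := by
    rw [show ((n:ℝ) + 1/2) - 1 = (n:ℝ) + (-(1/2)) by ring, rpow_add h1, rpow_natCast,
      rpow_neg h1.le, sqrt_eq_rpow]
  have e2 : (1-t) ^ ((1/2:ℝ) - 1) = (Real.sqrt (1-t))⁻¹ := by
    rw [show (1/2:ℝ) - 1 = -(1/2) by ring, rpow_neg h2.le, sqrt_eq_rpow]
  rw [e1, e2, w1, one_div, mul_inv]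
  ring

lemma integrand_eq2 (n : ℕ) {t : ℝ} (ht : t ∈ Ioo (0:ℝ) 1) :
    t ^ (((n:ℝ) + 1/2) - 1) * (1-t) ^ ((3/2:ℝ) - 1) = t ^ n * w2 t := by
  have h1 : (0:ℝ) < t := ht.1
  have h2 : (0:ℝ) < 1 - t := by linarith [ht.2]
  have e1 : t ^ (((n:ℝ) + 1/2) - 1) = t ^ n * (Real.sqrt t)⁻¹ := by
    rw [show ((n:ℝ) + 1/2) - 1 = (n:ℝ) + (-(1/2)) by ring, rpow_add h1, rpow_natCast,
      rpow_neg h1.le, sqrt_eq_rpow]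
  have e2 : (1-t) ^ ((3/2:ℝ) - 1) = Real.sqrt (1-t) := by
    rw [show (3/2:ℝ) - 1 = 1/2 by ring, sqrt_eq_rpow]
  rw [e1, e2, w2, div_eq_mul_inv]
  ring

lemma integrableOn_pow_w1 (n : ℕ) :
    IntegrableOn (fun t => t ^ n * w1 t) (Ioo (0:ℝ) 1) :=
  (integrableOn_beta_integrand (a := (n:ℝ) + 1/2) (b := 1/2) (by positivity)
    (by norm_num)).congr_fun (fun t ht => integrand_eq1 n ht) measurableSet_Ioo

lemma integrableOn_pow_w2 (n : ℕ) :
    IntegrableOn (fun t => t ^ n * w2 t) (Ioo (0:ℝ) 1) :=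
  (integrableOn_beta_integrand (a := (n:ℝ) + 1/2) (b := 3/2) (by positivity)
    (by norm_num)).congr_fun (fun t ht => integrand_eq2 n ht) measurableSet_Ioo

lemma integrableOn_w1 : IntegrableOn w1 (Ioo (0:ℝ) 1) :=
  (integrableOn_pow_w1 0).congr_fun (fun t _ => by simp) measurableSet_Ioo

lemma integrableOn_w2 : IntegrableOn w2 (Ioo (0:ℝ) 1) :=
  (integrableOn_pow_w2 0).congr_fun (fun t _ => by simp) measurableSet_Ioo

lemma integral_exp_series (w : ℝ → ℝ) (hmeas : Measurable w) (hnn : ∀ t, 0 ≤ w t)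
    (hint : ∀ n : ℕ, IntegrableOn (fun t => t ^ n * w t) (Ioo (0:ℝ) 1))
    {z : ℝ} (hz : 0 ≤ z) :
    ∫ t in Ioo (0:ℝ) 1, Real.exp (-(z*t)) * w t
      = ∑' n : ℕ, (-z)^n / n.factorial * ∫ t in Ioo (0:ℝ) 1, t^n * w t := by
  set μ := volume.restrict (Ioo (0:ℝ) 1) with hμ
  set F : ℕ → ℝ → ℝ := fun n t => ((-(z*t))^n / n.factorial) * w t with hF
  have hFeq : ∀ n : ℕ, F n = fun t => ((-z)^n / n.factorial) * (t^n * w t) := by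
    intro n; funext t
    simp only [hF]
    rw [show (-(z*t)) = (-z)*t by ring, mul_pow]
    ring
  have hFint : ∀ n : ℕ, Integrable (F n) μ := by
    intro n
    rw [hFeq n]
    exact ((hint n).const_mul _)
  have hB : ∀ n : ℕ, ∫ t, ‖F n t‖ ∂μ ≤ z^n / n.factorial * ∫ t in Ioo (0:ℝ) 1, w t := by
    intro n
    have hle : ∀ t ∈ Ioo (0:ℝ) 1, ‖F n t‖ ≤ z^n / n.factorial * w t := by
      intro t ht
      simp only [hF, norm_mul, norm_div, norm_pow, norm_neg]
      rw [Real.norm_of_nonneg (hnn t), Real.norm_of_nonneg (by positivity : (0:ℝ) ≤ (n.factorial:ℝ))]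
      rw [Real.norm_of_nonneg hz, Real.norm_of_nonneg ht.1.le]
      have h2 : (z*t)^n ≤ z^n := by
        rw [mul_pow]
        have : t^n ≤ 1 := pow_le_one₀ ht.1.le ht.2.le
        nlinarith [pow_nonneg hz n, pow_nonneg ht.1.le n]
      have h3 : (0:ℝ) < n.factorial := by positivity
      have := hnn t
      rw [div_mul_eq_mul_div, div_mul_eq_mul_div, div_le_div_iff_of_pos_right h3]
      nlinarith
    calc ∫ t, ‖F n t‖ ∂μ ≤ ∫ t in Ioo (0:ℝ) 1, z^n / n.factorial * w t := by
          refine setIntegral_mono_on (hFint n).norm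
            (((hint 0).congr_fun (fun t _ => by simp) measurableSet_Ioo).const_mul _)
            measurableSet_Ioo hle
      _ = z^n / n.factorial * ∫ t in Ioo (0:ℝ) 1, w t := MeasureTheory.integral_const_mul _ _
  have hW0 : ∫ t in Ioo (0:ℝ) 1, w t = ∫ t in Ioo (0:ℝ) 1, t^0 * w t := by
    refine setIntegral_congr_fun measurableSet_Ioo fun t _ => by simp
  have hsum : Summable (fun n => ∫ t, ‖F n t‖ ∂μ) := by
    refine Summable.of_nonneg_of_le (fun n => integral_nonneg fun t => norm_nonneg _)
      hB ?_
    exact (Real.summable_pow_div_factorial z).mul_right _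
  have key := MeasureTheory.integral_tsum_of_summable_integral_norm hFint hsum
  have hptw : ∀ t : ℝ, ∑' n : ℕ, F n t = Real.exp (-(z*t)) * w t := by
    intro t
    rw [Real.exp_eq_exp_ℝ, NormedSpace.exp_eq_tsum_div]
    exact tsum_mul_right
  calc ∫ t, Real.exp (-(z*t)) * w t ∂μ = ∫ t, ∑' n, F n t ∂μ := by
        refine integral_congr_ae (Eventually.of_forall fun t => (hptw t).symm)
    _ = ∑' n, ∫ t, F n t ∂μ := key.symm
    _ = ∑' n : ℕ, (-z)^n / n.factorial * ∫ t in Ioo (0:ℝ) 1, t^n * w t := by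
        refine tsum_congr fun n => ?_
        rw [hFeq n, hμ]
        exact MeasureTheory.integral_const_mul _ _

def J1 (z : ℝ) : ℝ := ∫ t in Ioo (0:ℝ) 1, Real.exp (-(z*t)) * w1 t
def J2 (z : ℝ) : ℝ := ∫ t in Ioo (0:ℝ) 1, Real.exp (-(z*t)) * w2 t

lemma summable_aux {f : ℕ → ℝ} {z c : ℝ} (h : ∀ n, |f n| ≤ c * (z^n / n.factorial)) :
    Summable f :=
  Summable.of_abs (Summable.of_nonneg_of_le (fun n => abs_nonneg _) h
    ((Real.summable_pow_div_factorial z).mul_left c))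

lemma Lhalf_eq {z : ℝ} (hz : 0 ≤ z) :
    Lhalf z = (1/π) * J1 z + (2*z/π) * J2 z := by
  have hπ : (π:ℝ) ≠ 0 := pi_ne_zero
  have hfac_pos : ∀ n : ℕ, (0:ℝ) < n.factorial := fun n => by positivity
  have habs : ∀ n : ℕ, |(-z)^n| = z^n := fun n => by
    rw [abs_pow, abs_neg, abs_of_nonneg hz]
  have hJ1 : J1 z = ∑' n : ℕ, (-z)^n / n.factorial * (π * (P n / n.factorial)) := by
    rw [J1, integral_exp_series w1 measurable_w1 w1_nonneg integrableOn_pow_w1 hz]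
    exact tsum_congr fun n => by rw [beta1]
  have hJ2 : J2 z = ∑' n : ℕ, (-z)^n / n.factorial * (π * (P n / (2*(n+1).factorial))) := by
    rw [J2, integral_exp_series w2 measurable_w2 w2_nonneg integrableOn_pow_w2 hz]
    exact tsum_congr fun n => by rw [beta2]
  set p : ℕ → ℝ := fun n => (-z)^n * P n / ((n.factorial : ℝ))^2 with hp_def
  set q : ℕ → ℝ := fun n =>
    -((-z)^(n+1)) * P n / ((n.factorial : ℝ) * (((n+1).factorial : ℝ))) with hq_def
  have hp_sum : Summable p := by
    refine summable_aux (c := 1) (z := z) fun n => ?_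
    rw [hp_def]
    simp only
    rw [abs_div, abs_mul, habs n, abs_of_nonneg (P_nonneg n),
      abs_of_nonneg (by positivity : (0:ℝ) ≤ ((n.factorial:ℝ))^2)]
    have e : z^n * P n / ((n.factorial:ℝ))^2
        = (z^n/(n.factorial:ℝ)) * (P n/(n.factorial:ℝ)) := by ring
    rw [e, one_mul]
    calc (z^n/(n.factorial:ℝ)) * (P n/(n.factorial:ℝ))
        ≤ (z^n/(n.factorial:ℝ)) * 1 := by
          refine mul_le_mul_of_nonneg_left ?_ (by positivity)
          exact (div_le_one (hfac_pos n)).mpr (P_le_factorial n)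
      _ = z^n/(n.factorial:ℝ) := mul_one _
  have hq_sum : Summable q := by
    refine summable_aux (c := z) (z := z) fun n => ?_
    rw [hq_def]
    simp only
    rw [abs_div, abs_mul, abs_neg, habs (n+1), abs_of_nonneg (P_nonneg n),
      abs_of_nonneg (by positivity : (0:ℝ) ≤ (n.factorial:ℝ) * ((n+1).factorial:ℝ))]
    have e : z^(n+1) * P n / ((n.factorial:ℝ) * ((n+1).factorial:ℝ))
        = (z^n/(n.factorial:ℝ)) * (z * (P n/((n+1).factorial:ℝ))) := by ring
    rw [e, mul_comm z (z^n/(n.factorial:ℝ))]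
    refine mul_le_mul_of_nonneg_left ?_ (by positivity)
    calc z * (P n/((n+1).factorial:ℝ)) ≤ z * 1 := by
          refine mul_le_mul_of_nonneg_left ?_ hz
          refine (div_le_one (hfac_pos (n+1))).mpr ?_
          exact le_trans (P_le_factorial n) (Nat.cast_le.mpr (Nat.factorial_le (Nat.le_succ n)))
      _ = z := mul_one z
  have hL_sum : Summable (fun n : ℕ => A n / ((n.factorial : ℝ))^2 * (-z)^n) := by
    refine summable_aux (c := 1) (z := z) fun n => ?_
    rw [abs_mul, abs_div, habs n, abs_of_nonneg (by positivity : (0:ℝ) ≤ ((n.factorial:ℝ))^2),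
      one_mul]
    have e : |A n| / ((n.factorial:ℝ))^2 * z^n
        = (z^n/(n.factorial:ℝ)) * (|A n|/(n.factorial:ℝ)) := by ring
    rw [e]
    calc (z^n/(n.factorial:ℝ)) * (|A n|/(n.factorial:ℝ))
        ≤ (z^n/(n.factorial:ℝ)) * 1 := by
          refine mul_le_mul_of_nonneg_left ?_ (by positivity)
          exact (div_le_one (hfac_pos n)).mpr (A_abs_le_factorial n)
      _ = z^n/(n.factorial:ℝ) := mul_one _
  have hstep : ∀ n : ℕ, A (n+1) / (((n+1).factorial : ℝ))^2 * (-z)^(n+1) = p (n+1) + q n := by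
    intro n
    have hfs : (((n+1).factorial : ℝ)) = ((n:ℝ)+1) * (n.factorial:ℝ) := by
      rw [Nat.factorial_succ]; push_cast; ring
    rw [A_succ, hp_def, hq_def]
    simp only
    rw [P_succ, hfs]
    have h1 := (hfac_pos n).ne'
    have h2 : ((n:ℝ)+1) ≠ 0 := by positivity
    field_simp
    ring
  have h0 : A 0 / ((Nat.factorial 0 : ℝ))^2 * (-z)^0 = p 0 := by
    simp [A_zero, hp_def, P_zero]
  have key : Lhalf z = ∑' n, p n + ∑' n, q n := by
    calc Lhalf z = ∑' n : ℕ, A n / ((n.factorial : ℝ))^2 * (-z)^n := rfl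
      _ = A 0 / ((Nat.factorial 0 : ℝ))^2 * (-z)^0
          + ∑' n : ℕ, A (n+1) / (((n+1).factorial : ℝ))^2 * (-z)^(n+1) :=
            Summable.tsum_eq_zero_add hL_sum
      _ = p 0 + ∑' n : ℕ, (p (n+1) + q n) := by
            rw [h0]; congr 1; exact tsum_congr hstep
      _ = p 0 + (∑' n : ℕ, p (n+1) + ∑' n : ℕ, q n) := by
            rw [Summable.tsum_add ((summable_nat_add_iff 1).mpr hp_sum) hq_sum]
      _ = (p 0 + ∑' n : ℕ, p (n+1)) + ∑' n, q n := by ring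
      _ = ∑' n, p n + ∑' n, q n := by rw [← Summable.tsum_eq_zero_add hp_sum]
  rw [key, hJ1, hJ2, ← tsum_mul_left, ← tsum_mul_left]
  congr 1
  · refine tsum_congr fun n => ?_
    rw [hp_def]
    simp only
    have h1 := (hfac_pos n).ne'
    field_simp
  · refine tsum_congr fun n => ?_
    rw [hq_def]
    simp only
    have h1 := (hfac_pos n).ne'
    have h2 := (hfac_pos (n+1)).ne'
    rw [pow_succ]
    field_simp

lemma tendsto_J1 : Tendsto J1 atTop (𝓝 0) := by
  have h := MeasureTheory.tendsto_integral_filter_of_dominated_convergence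
    (μ := volume.restrict (Ioo (0:ℝ) 1)) (F := fun (z : ℝ) t => Real.exp (-(z*t)) * w1 t)
    (f := fun _ => (0:ℝ)) (bound := w1) (l := atTop)
    (Eventually.of_forall fun z => Measurable.aestronglyMeasurable
      ((by fun_prop : Measurable fun t : ℝ => Real.exp (-(z*t))).mul measurable_w1))
    ?_ integrableOn_w1 ?_
  · exact (by simpa using h : Tendsto (fun z => ∫ t in Ioo (0:ℝ) 1, Real.exp (-(z*t)) * w1 t) atTop (𝓝 0))
  · filter_upwards [eventually_ge_atTop (0:ℝ)] with z hz
    filter_upwards [ae_restrict_mem measurableSet_Ioo] with t ht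
    rw [Real.norm_eq_abs, abs_of_nonneg (mul_nonneg (Real.exp_nonneg _) (w1_nonneg t))]
    refine mul_le_of_le_one_left (w1_nonneg t) ?_
    rw [Real.exp_le_one_iff]
    nlinarith [ht.1.le]
  · filter_upwards [ae_restrict_mem measurableSet_Ioo] with t ht
    have h1 : Tendsto (fun z : ℝ => -(z*t)) atTop atBot :=
      tendsto_neg_atTop_atBot.comp (tendsto_id.atTop_mul_const ht.1)
    simpa using (Real.tendsto_exp_atBot.comp h1).mul_const (w1 t)

lemma integrableOn_bound : IntegrableOn (fun u => Real.exp (-u) / Real.sqrt u) (Ioi (0:ℝ)) := by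
  have h := Real.GammaIntegral_convergent (s := 1/2) (by norm_num)
  refine h.congr_fun (fun u hu => ?_) measurableSet_Ioi
  beta_reduce
  rw [show (1/2:ℝ) - 1 = -(1/2) by ring, rpow_neg (le_of_lt hu), sqrt_eq_rpow]
  exact (div_eq_mul_inv _ _).symm

lemma integral_bound : ∫ u in Ioi (0:ℝ), Real.exp (-u) / Real.sqrt u = Real.sqrt π := by
  calc ∫ u in Ioi (0:ℝ), Real.exp (-u) / Real.sqrt u
      = ∫ u in Ioi (0:ℝ), Real.exp (-u) * u ^ ((1/2:ℝ) - 1) := by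
        refine setIntegral_congr_fun measurableSet_Ioi fun u hu => ?_
        rw [show (1/2:ℝ) - 1 = -(1/2) by ring, rpow_neg (le_of_lt hu), sqrt_eq_rpow]
        exact div_eq_mul_inv _ _
    _ = Real.Gamma (1/2) := (Real.Gamma_eq_integral (by norm_num)).symm
    _ = Real.sqrt π := Real.Gamma_one_half_eq

lemma sqrtJ2_eq {z : ℝ} (hz : 0 < z) :
    Real.sqrt z * J2 z = ∫ u in Ioi (0:ℝ), Real.exp (-u) * Real.sqrt (1 - u/z) / Real.sqrt u := by
  have h1 : J2 z = ∫ t in Ioi (0:ℝ), Real.exp (-(z*t)) * w2 t := by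
    rw [J2]
    symm
    refine setIntegral_eq_of_subset_of_forall_diff_eq_zero measurableSet_Ioi
      Ioo_subset_Ioi_self fun t ht => ?_
    have h1t : (1:ℝ) ≤ t := by
      rcases ht with ⟨ht1, ht2⟩
      by_contra hc
      push_neg at hc
      exact ht2 ⟨ht1, hc⟩
    have : Real.sqrt (1 - t) = 0 := Real.sqrt_eq_zero'.mpr (by linarith)
    simp [w2, this]
  have h2 : ∀ t ∈ Ioi (0:ℝ), Real.exp (-(z*t)) * w2 t
      = (fun u => Real.exp (-u) * w2 (u/z)) (z*t) := by
    intro t _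
    simp only
    rw [mul_div_cancel_left₀ _ hz.ne']
  have h4 := MeasureTheory.integral_comp_mul_left_Ioi (fun u => Real.exp (-u) * w2 (u/z)) 0 hz
  rw [mul_zero] at h4
  rw [h1, setIntegral_congr_fun measurableSet_Ioi h2, h4, smul_eq_mul]
  have h3 : ∀ u ∈ Ioi (0:ℝ), Real.exp (-u) * w2 (u/z)
      = Real.sqrt z * (Real.exp (-u) * Real.sqrt (1 - u/z) / Real.sqrt u) := by
    intro u _
    rw [w2, sqrt_div' u hz.le, div_div_eq_mul_div]
    ring
  rw [setIntegral_congr_fun measurableSet_Ioi h3, MeasureTheory.integral_const_mul,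
    ← mul_assoc, ← mul_assoc]
  have h4 : Real.sqrt z * z⁻¹ * Real.sqrt z = 1 := by
    rw [mul_comm (Real.sqrt z) z⁻¹, mul_assoc, mul_self_sqrt hz.le]
    exact inv_mul_cancel₀ hz.ne'
  rw [h4, one_mul]

lemma tendsto_J2 : Tendsto (fun z => Real.sqrt z * J2 z) atTop (𝓝 (Real.sqrt π)) := by
  rw [← integral_bound]
  have h := MeasureTheory.tendsto_integral_filter_of_dominated_convergence
    (μ := volume.restrict (Ioi (0:ℝ)))
    (F := fun (z : ℝ) u => Real.exp (-u) * Real.sqrt (1 - u/z) / Real.sqrt u)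
    (f := fun u => Real.exp (-u) / Real.sqrt u)
    (bound := fun u => Real.exp (-u) / Real.sqrt u) (l := atTop)
    (Eventually.of_forall fun z => Measurable.aestronglyMeasurable (by fun_prop))
    ?_ integrableOn_bound ?_
  · refine Tendsto.congr' ?_ h
    filter_upwards [eventually_gt_atTop (0:ℝ)] with z hz
    exact (sqrtJ2_eq hz).symm
  · filter_upwards [eventually_gt_atTop (0:ℝ)] with z hz
    filter_upwards [ae_restrict_mem measurableSet_Ioi] with u hu
    have hu0 : (0:ℝ) < u := hu
    rw [Real.norm_eq_abs, abs_of_nonneg (by positivity)]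
    have hle : Real.sqrt (1 - u/z) ≤ 1 := by
      rw [Real.sqrt_le_one]
      have : 0 ≤ u/z := by positivity
      linarith
    calc Real.exp (-u) * Real.sqrt (1 - u/z) / Real.sqrt u
        ≤ Real.exp (-u) * 1 / Real.sqrt u := by gcongr
      _ = Real.exp (-u) / Real.sqrt u := by rw [mul_one]
  · filter_upwards [ae_restrict_mem measurableSet_Ioi] with u hu
    have h0 : Tendsto (fun z : ℝ => u/z) atTop (𝓝 0) := by
      simpa [div_eq_mul_inv] using tendsto_inv_atTop_zero.const_mul u
    have h2 : Tendsto (fun z : ℝ => Real.sqrt (1 - u/z)) atTop (𝓝 1) := by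
      have h1 : Tendsto (fun z : ℝ => 1 - u/z) atTop (𝓝 1) := by
        simpa using (tendsto_const_nhds (x := (1:ℝ)) (f := atTop)).sub h0
      have := (Real.continuous_sqrt.tendsto 1).comp h1
      simpa [Function.comp_def] using this
    have := (h2.const_mul (Real.exp (-u))).div_const (Real.sqrt u)
    simpa using this

end QAux

open Real Topology MeasureTheory QAux

/-- Asymptotics of `q(α,x) = L(αx)/√(1+x)`: it tends to `2√(α/π)` as `x → ∞`. -/
theorem q_tendsto_atTop (α : ℝ) (hα : 0 < α) :
    Tendsto (fun x : ℝ => Lhalf (α * x) / Real.sqrt (1 + x)) atTop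
      (nhds (2 * Real.sqrt (α / Real.pi))) := by
  have hπs : Real.sqrt π ≠ 0 := by positivity
  have hzx : Tendsto (fun x : ℝ => α * x) atTop atTop :=
    Tendsto.const_mul_atTop hα tendsto_id
  have T1 : Tendsto (fun x : ℝ => J1 (α * x)) atTop (𝓝 0) := tendsto_J1.comp hzx
  have T2 : Tendsto (fun x : ℝ => Real.sqrt (α*x) * J2 (α*x)) atTop (𝓝 (Real.sqrt π)) :=
    tendsto_J2.comp hzx
  have hadd : Tendsto (fun x : ℝ => 1 + x) atTop atTop :=
    tendsto_atTop_add_const_left atTop 1 tendsto_id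
  have Tinv : Tendsto (fun x : ℝ => 1 / Real.sqrt (1+x)) atTop (𝓝 0) := by
    have h1 : Tendsto (fun x : ℝ => Real.sqrt (1+x)) atTop atTop := by
      refine ((tendsto_rpow_atTop (y := (1/2:ℝ)) (by norm_num)).comp hadd).congr fun x => ?_
      exact (Real.sqrt_eq_rpow _).symm
    simpa [one_div, Pi.inv_def] using h1.inv_tendsto_atTop
  have Tinv1 : Tendsto (fun x : ℝ => 1/(1+x)) atTop (𝓝 0) := by
    simpa [one_div, Pi.inv_def] using hadd.inv_tendsto_atTop
  have T3 : Tendsto (fun x : ℝ => Real.sqrt (α*x) / Real.sqrt (1+x)) atTop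
      (𝓝 (Real.sqrt α)) := by
    have h0 : Tendsto (fun x : ℝ => α * (1 - 1/(1+x))) atTop (𝓝 α) := by
      have h := ((tendsto_const_nhds (x := (1:ℝ)) (f := atTop)).sub Tinv1).const_mul α
      simpa using h
    have hs := (Real.continuous_sqrt.tendsto α).comp h0
    refine Tendsto.congr' ?_ hs
    filter_upwards [eventually_gt_atTop (0:ℝ)] with x hx
    have h1x : (0:ℝ) < 1 + x := by linarith
    have e : α * (1 - 1/(1+x)) = α*x/(1+x) := by field_simp; ring
    simp only [Function.comp]
    rw [e, Real.sqrt_div (by positivity) _]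
  have Tfin := (((T1.const_mul (1/π)).mul Tinv)).add ((T2.mul T3).const_mul (2/π))
  have hval : (1/π) * 0 * 0 + (2/π)*(Real.sqrt π * Real.sqrt α) = 2 * Real.sqrt (α/π) := by
    rw [Real.sqrt_div hα.le]
    have hss : Real.sqrt π * Real.sqrt π = π := Real.mul_self_sqrt pi_pos.le
    field_simp
    linear_combination (2 * Real.sqrt α) * hss
  rw [hval] at Tfin
  refine Tendsto.congr' ?_ Tfin
  filter_upwards [eventually_gt_atTop (0:ℝ)] with x hx
  have hz0 : (0:ℝ) ≤ α*x := by positivity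
  have hsx : Real.sqrt (1+x) ≠ 0 := ne_of_gt (Real.sqrt_pos.mpr (by linarith))
  have haa : Real.sqrt (α*x) * Real.sqrt (α*x) = α*x := Real.mul_self_sqrt hz0
  have key : ∀ a b r s : ℝ, s ≠ 0 → r*r = α*x →
      (1/π)*a*(1/s) + (2/π)*((r*b)*(r/s)) = ((1/π)*a + (2*(α*x)/π)*b)/s := by
    intro a b r s hs hr
    rw [← hr]
    field_simp
  rw [key (J1 (α*x)) (J2 (α*x)) (Real.sqrt (α*x)) (Real.sqrt (1+x)) hsx haa,
    ← Lhalf_eq hz0]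
end
end

section
/- For every real z > 0, lim_{ρ → 1⁻} √(1−ρ²)·L(ρ²·z/(1−ρ²)) = 2·√(z/π). -/
noncomputable section

open Filter

open Real MeasureTheory intervalIntegral Set Filter

namespace PCL

def p (n : ℕ) : ℝ := (ascPochhammer ℝ n).eval (1/2)
def q (n : ℕ) : ℝ := (ascPochhammer ℝ n).eval (-(1/2))

lemma p_zero : p 0 = 1 := by simp [p]
lemma q_zero : q 0 = 1 := by simp [q]

lemma p_succ (n : ℕ) : p (n+1) = p n * (1/2 + n) := by
  simp [p, ascPochhammer_succ_eval]

lemma q_succ (n : ℕ) : q (n+1) = q n * (-(1/2) + n) := by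
  simp [q, ascPochhammer_succ_eval]

lemma p_nonneg (n : ℕ) : 0 ≤ p n := by
  induction n with
  | zero => simp [p_zero]
  | succ n ih => rw [p_succ]; positivity

lemma p_le_factorial (n : ℕ) : p n ≤ n.factorial := by
  induction n with
  | zero => simp [p_zero]
  | succ n ih =>
    rw [p_succ, Nat.factorial_succ]
    push_cast
    have h2 : (1:ℝ)/2 + n ≤ n + 1 := by linarith
    calc p n * (1/2 + n) ≤ (n.factorial : ℝ) * (n + 1) := by
          apply mul_le_mul ih h2 (by positivity) (by positivity)
      _ = ((n:ℝ) + 1) * n.factorial := by ring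

lemma q_succ_eq (n : ℕ) : q (n+1) = -(p n) / 2 := by
  induction n with
  | zero => simp [q_succ, q_zero, p_zero]; norm_num
  | succ n ih =>
    rw [q_succ, ih, p_succ]
    push_cast
    ring

lemma abs_q_le (n : ℕ) : |q n| ≤ n.factorial := by
  cases n with
  | zero => simp [q_zero]
  | succ n =>
    rw [q_succ_eq, Nat.factorial_succ]
    rw [abs_div, abs_neg, abs_of_nonneg (p_nonneg n)]
    push_cast
    have := p_le_factorial n
    have h1 : (1:ℝ) ≤ n.factorial := by exact_mod_cast n.factorial_pos
    calc p n / |(2:ℝ)| = p n / 2 := by norm_num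
      _ ≤ (n.factorial : ℝ) := by nlinarith
      _ ≤ ((n:ℝ)+1) * n.factorial := by nlinarith

def W (n : ℕ) : ℝ := ∫ θ in (0:ℝ)..(π/2), cos θ ^ (2*n)

lemma W_zero : W 0 = π/2 := by simp [W]

lemma W_succ (n : ℕ) : W (n+1) = (2*n+1)/(2*n+2) * W n := by
  have h : 2*(n+1) = 2*n + 2 := by ring
  rw [W, W, h, integral_cos_pow]
  simp [Real.cos_pi_div_two]

lemma W_eq (n : ℕ) : W n = π/2 * (p n / n.factorial) := by
  induction n with
  | zero => simp [W_zero, p_zero]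
  | succ n ih =>
    rw [W_succ, ih, p_succ, Nat.factorial_succ]
    have h1 : (n.factorial : ℝ) ≠ 0 := by exact_mod_cast n.factorial_ne_zero
    have h2 : (2*(n:ℝ)+2) ≠ 0 := by positivity
    push_cast
    field_simp
    ring

/-! ### The series expansion of the integrand -/

def Fm (x : ℝ) (m : ℕ) (θ : ℝ) : ℝ :=
  (1 + 2*x*Real.sin θ^2) * ((-(x * Real.cos θ^2))^m / m.factorial)

lemma Fm_cont (x : ℝ) (m : ℕ) : Continuous (Fm x m) := by
  unfold Fm; fun_prop

lemma Fm_tsum (x θ : ℝ) :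
    ∑' m, Fm x m θ = (1 + 2*x*Real.sin θ^2) * Real.exp (-(x * Real.cos θ^2)) := by
  rw [Real.exp_eq_exp_ℝ, NormedSpace.exp_eq_tsum_div, ← tsum_mul_left]
  rfl

lemma Fm_norm_le {x : ℝ} (hx : 0 ≤ x) (m : ℕ) (θ : ℝ) :
    ‖Fm x m θ‖ ≤ (1 + 2*x) * (x^m / m.factorial) := by
  have hs : Real.sin θ^2 ≤ 1 := sin_sq_le_one θ
  have hc : Real.cos θ^2 ≤ 1 := cos_sq_le_one θ
  have hs0 : 0 ≤ Real.sin θ^2 := sq_nonneg _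
  have hc0 : 0 ≤ Real.cos θ^2 := sq_nonneg _
  unfold Fm
  rw [Real.norm_eq_abs, abs_mul, abs_div, abs_pow, abs_neg, Nat.abs_cast]
  have h1 : |1 + 2*x*Real.sin θ^2| ≤ 1 + 2*x := by
    rw [abs_of_nonneg (by nlinarith)]; nlinarith
  have h2 : |x * Real.cos θ^2| ^ m ≤ x^m := by
    apply pow_le_pow_left₀ (abs_nonneg _)
    rw [abs_of_nonneg (by positivity)]; nlinarith
  have hf : (0:ℝ) < m.factorial := by exact_mod_cast m.factorial_pos
  apply mul_le_mul h1 (by exact div_le_div_of_nonneg_right h2 hf.le) (by positivity)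
    (by positivity)

lemma Fm_integral {x : ℝ} (m : ℕ) :
    ∫ θ in (0:ℝ)..(π/2), Fm x m θ
      = ((-x)^m / m.factorial) * ((1+2*x) * W m - 2*x * W (m+1)) := by
  have key : ∀ θ : ℝ, Fm x m θ
      = ((-x)^m / m.factorial) * ((1+2*x) * cos θ^(2*m) - 2*x * cos θ^(2*(m+1))) := by
    intro θ
    unfold Fm
    have h1 : (-(x * Real.cos θ^2))^m = (-x)^m * (Real.cos θ^2)^m := by
      rw [← neg_mul, mul_pow]
    rw [h1, Real.sin_sq, pow_mul, pow_mul]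
    ring
  rw [intervalIntegral.integral_congr (fun θ _ => key θ)]
  rw [intervalIntegral.integral_const_mul]
  rw [intervalIntegral.integral_sub ((by fun_prop : Continuous fun θ : ℝ =>
      (1+2*x) * cos θ ^ (2*m)).intervalIntegrable _ _)
      ((by fun_prop : Continuous fun θ : ℝ => 2*x * cos θ ^ (2*(m+1))).intervalIntegrable _ _)]
  rw [intervalIntegral.integral_const_mul, intervalIntegral.integral_const_mul]
  rfl

lemma Fm_integral_norm_le {x : ℝ} (hx : 0 ≤ x) (m : ℕ) :
    ∫ θ in Ioc (0:ℝ) (π/2), ‖Fm x m θ‖ ≤ (π/2) * ((1+2*x) * (x^m / m.factorial)) := by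
  have h0 : (0:ℝ) ≤ π/2 := by positivity
  calc ∫ θ in Ioc (0:ℝ) (π/2), ‖Fm x m θ‖
      ≤ ∫ _θ in Ioc (0:ℝ) (π/2), (1+2*x) * (x^m / m.factorial) := by
        apply setIntegral_mono_on ((Fm_cont x m).norm.integrableOn_Ioc)
          (integrableOn_const measure_Ioc_lt_top.ne enorm_ne_top) measurableSet_Ioc
        exact fun θ _ => Fm_norm_le hx m θ
    _ = (π/2) * ((1+2*x) * (x^m / m.factorial)) := by
        rw [setIntegral_const, smul_eq_mul, measureReal_def, Real.volume_Ioc]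
        rw [ENNReal.toReal_ofReal (by linarith)]
        norm_num

/-! ### Summing the term integrals -/

lemma term_sum {x : ℝ} (hx : 0 ≤ x) :
    ∑' m : ℕ, (((-x)^m / m.factorial) * ((1+2*x) * W m - 2*x * W (m+1)))
      = (π/2) * Lhalf x := by
  set c : ℕ → ℝ := fun m => p m / m.factorial with hc
  have hfac : ∀ m : ℕ, (0:ℝ) < m.factorial := fun m => by exact_mod_cast m.factorial_pos
  have hc0 : ∀ m, 0 ≤ c m := fun m => div_nonneg (p_nonneg m) (hfac m).le
  have hc1 : ∀ m, c m ≤ 1 := fun m => by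
    rw [hc]; exact div_le_one_of_le₀ (p_le_factorial m) (hfac m).le
  set u : ℕ → ℝ := fun m => (-x)^m * c m / m.factorial with hu
  set v : ℕ → ℝ := fun m => (-x)^m * (2*x*(c m - c (m+1))) / m.factorial with hv
  set a : ℕ → ℝ := fun n => q n / ((n.factorial : ℝ))^2 * (-x)^n with ha
  have habs : ∀ m : ℕ, |(-x)^m| = x^m := fun m => by
    rw [abs_pow, abs_neg, abs_of_nonneg hx]
  -- summability
  have hsummu : Summable u := by
    apply Summable.of_norm_bounded (Real.summable_pow_div_factorial x)
    intro m
    rw [hu, Real.norm_eq_abs, abs_div, abs_mul, habs, Nat.abs_cast]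
    rw [abs_of_nonneg (hc0 m)]
    apply div_le_div_of_nonneg_right _ (hfac m).le
    nlinarith [pow_nonneg hx m, hc0 m, hc1 m]
  have hsummu' : Summable (fun m => u (m+1)) := (summable_nat_add_iff 1).2 hsummu
  have hsummv : Summable v := by
    apply Summable.of_norm_bounded ((Real.summable_pow_div_factorial x).mul_left (4*x))
    intro m
    rw [hv, Real.norm_eq_abs, abs_div, abs_mul, habs, Nat.abs_cast]
    have h1 : |2*x*(c m - c (m+1))| ≤ 4*x := by
      rw [abs_mul, abs_of_nonneg (by linarith : (0:ℝ) ≤ 2*x)]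
      have : |c m - c (m+1)| ≤ 2 := by
        rw [abs_sub_le_iff]
        constructor <;> nlinarith [hc0 m, hc1 m, hc0 (m+1), hc1 (m+1)]
      nlinarith
    calc x^m * |2*x*(c m - c (m+1))| / m.factorial
        ≤ x^m * (4*x) / m.factorial := by
          apply div_le_div_of_nonneg_right _ (hfac m).le
          exact mul_le_mul_of_nonneg_left h1 (pow_nonneg hx m)
      _ = 4*x * (x^m / m.factorial) := by ring
  have hsumma : Summable a := by
    apply Summable.of_norm_bounded (Real.summable_pow_div_factorial x)
    intro n
    rw [ha, Real.norm_eq_abs, abs_mul, abs_div, habs, abs_pow, Nat.abs_cast]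
    have h1 : |q n| / ((n.factorial:ℝ))^2 ≤ 1 / n.factorial := by
      rw [div_le_div_iff₀ (by positivity) (hfac n)]
      calc |q n| * n.factorial ≤ (n.factorial : ℝ) * n.factorial :=
            mul_le_mul_of_nonneg_right (abs_q_le n) (hfac n).le
        _ = 1 * ((n.factorial:ℝ))^2 := by ring
    calc |q n| / ((n.factorial:ℝ))^2 * x^n ≤ 1 / n.factorial * x^n :=
          mul_le_mul_of_nonneg_right h1 (pow_nonneg hx n)
      _ = x^n / n.factorial := by ring
  -- termwise identity
  have hterm : ∀ m : ℕ, u (m+1) + v m = a (m+1) := by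
    intro m
    simp only [hu, hv, ha]
    rw [q_succ_eq]
    simp only [hc, p_succ, Nat.factorial_succ]
    have hF : ((m.factorial : ℝ)) ≠ 0 := (hfac m).ne'
    have hm1 : ((m:ℝ) + 1) ≠ 0 := by positivity
    have hpow : (-x)^(m+1) = (-x)^m * (-x) := pow_succ _ _
    push_cast
    rw [hpow]
    field_simp
    ring
  -- the computation
  have step : ∀ m : ℕ, ((-x)^m / m.factorial) * ((1+2*x) * W m - 2*x * W (m+1))
      = (π/2) * (u m + v m) := by
    intro m
    rw [W_eq m, W_eq (m+1), hu, hv]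
    simp only [hc]
    ring
  rw [tsum_congr step, tsum_mul_left]
  congr 1
  rw [Summable.tsum_add hsummu hsummv, Summable.tsum_eq_zero_add hsummu, add_assoc,
      ← Summable.tsum_add hsummu' hsummv]
  have h0 : u 0 = 1 := by rw [hu]; simp [hc, p_zero]
  have hLa : Lhalf x = ∑' n, a n := rfl
  rw [hLa, Summable.tsum_eq_zero_add hsumma, h0]
  have ha0 : a 0 = 1 := by rw [ha]; simp [q_zero]
  rw [ha0]
  congr 1
  exact tsum_congr hterm

/-! ### The integral representation -/

lemma Lhalf_eq_integral {x : ℝ} (hx : 0 ≤ x) :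
    Lhalf x = (2/π) * ∫ θ in (0:ℝ)..(π/2),
      (1 + 2*x*Real.sin θ^2) * Real.exp (-(x * Real.cos θ^2)) := by
  have h0 : (0:ℝ) ≤ π/2 := by positivity
  have hswap : ∑' m, ∫ θ in Ioc (0:ℝ) (π/2), Fm x m θ
      = ∫ θ in Ioc (0:ℝ) (π/2), ∑' m, Fm x m θ := by
    apply integral_tsum_of_summable_integral_norm
      (fun m => (Fm_cont x m).integrableOn_Ioc)
    apply Summable.of_nonneg_of_le
      (fun m => setIntegral_nonneg measurableSet_Ioc (fun θ _ => norm_nonneg _))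
      (fun m => Fm_integral_norm_le hx m)
    exact ((Real.summable_pow_div_factorial x).mul_left (1+2*x)).mul_left (π/2)
  have hI : ∫ θ in (0:ℝ)..(π/2), (1 + 2*x*Real.sin θ^2) * Real.exp (-(x * Real.cos θ^2))
      = (π/2) * Lhalf x := by
    rw [integral_of_le h0]
    rw [show (fun θ => (1 + 2*x*Real.sin θ^2) * Real.exp (-(x * Real.cos θ^2)))
        = fun θ => ∑' m, Fm x m θ from funext fun θ => (Fm_tsum x θ).symm]
    rw [← hswap]
    have : ∀ m : ℕ, ∫ θ in Ioc (0:ℝ) (π/2), Fm x m θ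
        = ((-x)^m / m.factorial) * ((1+2*x) * W m - 2*x * W (m+1)) := by
      intro m
      rw [← integral_of_le h0]
      exact Fm_integral m
    rw [tsum_congr this]
    exact term_sum hx
  rw [hI]
  have hpi : (π:ℝ) ≠ 0 := Real.pi_ne_zero
  field_simp



lemma tendsto_sqrt_atTop : Tendsto Real.sqrt atTop atTop := by
  refine tendsto_atTop.2 fun b => ?_
  filter_upwards [eventually_ge_atTop ((max b 0)^2)] with x hx
  calc b ≤ max b 0 := le_max_left _ _
    _ = Real.sqrt ((max b 0)^2) := (Real.sqrt_sq (le_max_right b 0)).symm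
    _ ≤ Real.sqrt x := Real.sqrt_le_sqrt hx

/-- Trig + scaling substitution. -/
lemma key_sub {x : ℝ} (hx : 0 < x) :
    ∫ θ in (0:ℝ)..(π/2), Real.sin θ^2 * Real.exp (-(x * Real.cos θ^2))
      = (Real.sqrt x)⁻¹ * ∫ u in (0:ℝ)..(Real.sqrt x),
          Real.sqrt (1 - u^2/x) * Real.exp (-u^2) := by
  have h0 : (0:ℝ) ≤ π/2 := by positivity
  set g : ℝ → ℝ := fun t => Real.sqrt (1 - t^2) * Real.exp (-(x*t^2)) with hgdef
  have hg : Continuous g := by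
    apply Continuous.mul
    · exact Real.continuous_sqrt.comp (by fun_prop)
    · fun_prop
  -- step A : trig substitution
  have hder : ∀ θ ∈ uIcc (0:ℝ) (π/2), HasDerivAt Real.cos (-Real.sin θ) θ :=
    fun θ _ => Real.hasDerivAt_cos θ
  have h1 := intervalIntegral.integral_comp_smul_deriv hder
    (Real.continuous_sin.neg).continuousOn hg
  have h2 : (∫ θ in (0:ℝ)..(π/2), (-Real.sin θ) • (g ∘ Real.cos) θ)
      = - ∫ θ in (0:ℝ)..(π/2), Real.sin θ^2 * Real.exp (-(x * Real.cos θ^2)) := by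
    rw [← intervalIntegral.integral_neg]
    apply intervalIntegral.integral_congr
    intro θ hθ
    rw [uIcc_of_le h0] at hθ
    have hsin : 0 ≤ Real.sin θ :=
      Real.sin_nonneg_of_nonneg_of_le_pi hθ.1 (hθ.2.trans (by linarith [Real.pi_pos]))
    have hss : Real.sqrt (1 - Real.cos θ^2) = Real.sin θ := by
      rw [← Real.sin_sq θ]
      exact Real.sqrt_sq hsin
    simp only [Function.comp, smul_eq_mul, hgdef]
    rw [hss]
    ring
  have hA : (∫ θ in (0:ℝ)..(π/2), Real.sin θ^2 * Real.exp (-(x * Real.cos θ^2)))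
      = ∫ t in (0:ℝ)..1, g t := by
    rw [h2] at h1
    rw [Real.cos_zero, Real.cos_pi_div_two] at h1
    have := h1.symm
    rw [intervalIntegral.integral_symm] at this
    linarith [this]
  -- step B : linear substitution
  have hsx : Real.sqrt x ≠ 0 := (Real.sqrt_pos.2 hx).ne'
  have hB := intervalIntegral.integral_comp_div (a := (0:ℝ)) (b := Real.sqrt x)
    (c := Real.sqrt x) (f := g) hsx
  -- hB : ∫ u in 0..√x, g (u / √x) = √x • ∫ t in 0/√x..√x/√x, g t
  have hgu : ∀ u : ℝ, g (u / Real.sqrt x) = Real.sqrt (1 - u^2/x) * Real.exp (-u^2) := by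
    intro u
    have hd : (u / Real.sqrt x)^2 = u^2 / x := by
      rw [div_pow, Real.sq_sqrt hx.le]
    rw [hgdef]
    simp only
    rw [hd]
    congr 1
    rw [mul_div_assoc']
    rw [mul_comm x (u^2), mul_div_assoc, div_self hx.ne', mul_one]
  rw [zero_div, div_self hsx] at hB
  simp only [hgu] at hB
  rw [hA, hB, smul_eq_mul, ← mul_assoc, inv_mul_cancel₀ hsx, one_mul]

/-- Dominated convergence for the Gaussian-type integral. -/
lemma tendsto_gauss :
    Tendsto (fun x : ℝ => ∫ u in (0:ℝ)..(Real.sqrt x),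
        Real.sqrt (1 - u^2/x) * Real.exp (-u^2)) atTop
      (nhds (Real.sqrt π / 2)) := by
  set G : ℝ → ℝ → ℝ := fun x => (Ioc (0:ℝ) (Real.sqrt x)).indicator
    (fun u => Real.sqrt (1 - u^2/x) * Real.exp (-u^2)) with hGdef
  have hGint : ∀ x : ℝ, (∫ u in (0:ℝ)..(Real.sqrt x),
      Real.sqrt (1 - u^2/x) * Real.exp (-u^2)) = ∫ u, G x u := by
    intro x
    simp only [hGdef]
    rw [integral_of_le (Real.sqrt_nonneg x),
      MeasureTheory.integral_indicator measurableSet_Ioc]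
  have hlim : (Real.sqrt π / 2)
      = ∫ u, (Ioi (0:ℝ)).indicator (fun u => Real.exp (-u^2)) u := by
    rw [MeasureTheory.integral_indicator measurableSet_Ioi]
    have := integral_gaussian_Ioi 1
    simp only [neg_mul, one_mul, div_one] at this
    rw [this]
  simp only [hGint]
  rw [hlim]
  apply MeasureTheory.tendsto_integral_filter_of_dominated_convergence
    (bound := fun u => Real.exp (-u^2))
  · apply Eventually.of_forall
    intro x
    apply AEStronglyMeasurable.indicator _ measurableSet_Ioc
    apply Continuous.aestronglyMeasurable
    apply Continuous.mul
    · exact Real.continuous_sqrt.comp (by fun_prop)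
    · fun_prop
  · filter_upwards [eventually_gt_atTop (0:ℝ)] with x hx
    apply Eventually.of_forall
    intro u
    simp only [hGdef]
    by_cases hu : u ∈ Ioc (0:ℝ) (Real.sqrt x)
    · rw [indicator_of_mem hu]
      have h1 : Real.sqrt (1 - u^2/x) ≤ 1 := by
        have h0 : 0 ≤ u^2/x := by positivity
        calc Real.sqrt (1 - u^2/x) ≤ Real.sqrt 1 :=
              Real.sqrt_le_sqrt (by linarith)
          _ = 1 := Real.sqrt_one
      rw [Real.norm_eq_abs, abs_of_nonneg (by positivity)]
      nlinarith [Real.exp_pos (-u^2), Real.sqrt_nonneg (1 - u^2/x)]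
    · rw [indicator_of_notMem hu]
      simp [Real.exp_nonneg]
  · have := integrable_exp_neg_mul_sq (one_pos)
    simpa using this
  · apply Eventually.of_forall
    intro u
    rcases le_or_gt u 0 with hu | hu
    · have hzero : ∀ x : ℝ, G x u = 0 := by
        intro x
        simp only [hGdef]
        apply indicator_of_notMem
        simp only [mem_Ioc, not_and_or]
        left; exact not_lt.2 hu
      have hzero' : (Ioi (0:ℝ)).indicator (fun u => Real.exp (-u^2)) u = 0 := by
        apply indicator_of_notMem
        simpa using hu
      simp only [hzero, hzero']
      exact tendsto_const_nhds
    · have hval : (Ioi (0:ℝ)).indicator (fun u => Real.exp (-u^2)) u = Real.exp (-u^2) :=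
        indicator_of_mem (by simpa using hu) _
      rw [hval]
      have hT : Tendsto (fun x : ℝ => Real.sqrt (1 - u^2/x) * Real.exp (-u^2)) atTop
          (nhds (Real.exp (-u^2))) := by
        have h1 : Tendsto (fun x : ℝ => 1 - u^2/x) atTop (nhds 1) := by
          have h2 : Tendsto (fun x : ℝ => u^2/x) atTop (nhds 0) := by
            simpa [div_eq_mul_inv] using tendsto_inv_atTop_zero.const_mul (u^2)
          simpa using tendsto_const_nhds.sub h2
        have h3 : Tendsto (fun x : ℝ => Real.sqrt (1 - u^2/x)) atTop (nhds 1) := by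
          have := (Real.continuous_sqrt.continuousAt (x := (1:ℝ))).tendsto.comp h1
          rw [Real.sqrt_one] at this
          exact this
        simpa using h3.mul_const (Real.exp (-u^2))
      apply hT.congr'
      filter_upwards [eventually_ge_atTop (u^2)] with x hx
      simp only [hGdef]
      have hmem : u ∈ Ioc (0:ℝ) (Real.sqrt x) := by
        constructor
        · exact hu
        · calc u = Real.sqrt (u^2) := (Real.sqrt_sq hu.le).symm
            _ ≤ Real.sqrt x := Real.sqrt_le_sqrt hx
      rw [indicator_of_mem hmem]



/-! ### The full ratio limit -/

lemma tendsto_ratio :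
    Tendsto (fun x : ℝ => (Real.sqrt x)⁻¹ * ∫ θ in (0:ℝ)..(π/2),
        (1 + 2*x*Real.sin θ^2) * Real.exp (-(x * Real.cos θ^2)))
      atTop (nhds (Real.sqrt π)) := by
  have h0 : (0:ℝ) ≤ π/2 := by positivity
  have hA : Tendsto (fun x : ℝ => (Real.sqrt x)⁻¹ *
      ∫ θ in (0:ℝ)..(π/2), Real.exp (-(x * Real.cos θ^2))) atTop (nhds 0) := by
    have hub : Tendsto (fun x : ℝ => (Real.sqrt x)⁻¹ * (π/2)) atTop (nhds 0) := by
      simpa using (tendsto_sqrt_atTop.inv_tendsto_atTop).mul_const (π/2)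
    apply tendsto_of_tendsto_of_tendsto_of_le_of_le' tendsto_const_nhds hub
    · filter_upwards [eventually_ge_atTop (0:ℝ)] with x hx
      apply mul_nonneg (by positivity)
      apply intervalIntegral.integral_nonneg h0
      intro θ _; positivity
    · filter_upwards [eventually_ge_atTop (0:ℝ)] with x hx
      apply mul_le_mul_of_nonneg_left _ (by positivity)
      calc ∫ θ in (0:ℝ)..(π/2), Real.exp (-(x * Real.cos θ^2))
          ≤ ∫ _θ in (0:ℝ)..(π/2), (1:ℝ) := by
            apply intervalIntegral.integral_mono_on h0
              ((by fun_prop : Continuous fun θ : ℝ =>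
                Real.exp (-(x * Real.cos θ^2))).intervalIntegrable _ _)
              (intervalIntegrable_const)
            intro θ _
            rw [Real.exp_le_one_iff]
            have : 0 ≤ Real.cos θ^2 := sq_nonneg _
            nlinarith
        _ = π/2 := by simp
  have hB := tendsto_gauss.const_mul (2:ℝ)
  have hfin := hA.add hB
  rw [show (0 : ℝ) + 2 * (Real.sqrt π / 2) = Real.sqrt π by ring] at hfin
  apply hfin.congr'
  filter_upwards [eventually_gt_atTop (0:ℝ)] with x hx
  have hint1 : Continuous fun θ : ℝ => Real.exp (-(x * Real.cos θ^2)) := by fun_prop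
  have hint2 : Continuous fun θ : ℝ =>
      2*x*(Real.sin θ^2 * Real.exp (-(x * Real.cos θ^2))) := by fun_prop
  have hsplit : (∫ θ in (0:ℝ)..(π/2), (1 + 2*x*Real.sin θ^2) * Real.exp (-(x * Real.cos θ^2)))
      = (∫ θ in (0:ℝ)..(π/2), Real.exp (-(x * Real.cos θ^2)))
        + 2*x*(∫ θ in (0:ℝ)..(π/2), Real.sin θ^2 * Real.exp (-(x * Real.cos θ^2))) := by
    rw [← intervalIntegral.integral_const_mul,
        ← intervalIntegral.integral_add (hint1.intervalIntegrable _ _)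
          (hint2.intervalIntegrable _ _)]
    apply intervalIntegral.integral_congr
    intro θ _
    ring
  rw [hsplit, key_sub hx, mul_add]
  congr 1
  have hss : Real.sqrt x * Real.sqrt x = x := Real.mul_self_sqrt hx.le
  have hsx : Real.sqrt x ≠ 0 := (Real.sqrt_pos.2 hx).ne'
  rw [show (Real.sqrt x)⁻¹ * (2*x*((Real.sqrt x)⁻¹ *
      (∫ u in (0:ℝ)..(Real.sqrt x), Real.sqrt (1 - u^2/x) * Real.exp (-u^2))))
      = ((Real.sqrt x * Real.sqrt x)⁻¹ * x) *
        (2 * ∫ u in (0:ℝ)..(Real.sqrt x), Real.sqrt (1 - u^2/x) * Real.exp (-u^2)) by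
    rw [mul_inv]; ring]
  rw [hss, inv_mul_cancel₀ hx.ne', one_mul]

end PCL


/-- Perfect-correlation limit: for `z > 0`,
`√(1-ρ²) L(ρ² z/(1-ρ²)) → 2√(z/π)` as `ρ → 1⁻`. -/
theorem perfect_correlation_limit (z : ℝ) (hz : 0 < z) :
    Tendsto (fun ρ : ℝ => Real.sqrt (1 - ρ ^ 2) * Lhalf (ρ ^ 2 * z / (1 - ρ ^ 2)))
      (nhdsWithin 1 (Set.Iio 1)) (nhds (2 * Real.sqrt (z / Real.pi))) := by
  have hπ : (0:ℝ) < π := Real.pi_pos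
  have hIoo : Set.Ioo (0:ℝ) 1 ∈ nhdsWithin (1:ℝ) (Set.Iio 1) :=
    Ioo_mem_nhdsLT_of_mem (by constructor <;> norm_num)
  set φ : ℝ → ℝ := fun ρ => ρ^2 * z / (1 - ρ^2) with hφdef
  have hφ : Tendsto φ (nhdsWithin 1 (Set.Iio 1)) atTop := by
    have hnum : Tendsto (fun ρ : ℝ => ρ^2*z) (nhdsWithin 1 (Set.Iio 1)) (nhds z) := by
      have hc : Continuous (fun ρ : ℝ => ρ^2*z) := by fun_prop
      have := hc.tendsto (1:ℝ)
      simp only [one_pow, one_mul] at this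
      exact this.mono_left nhdsWithin_le_nhds
    have hden : Tendsto (fun ρ : ℝ => (1 - ρ^2)⁻¹) (nhdsWithin 1 (Set.Iio 1)) atTop := by
      apply Filter.Tendsto.inv_tendsto_nhdsGT_zero
      rw [tendsto_nhdsWithin_iff]
      constructor
      · have hc : Continuous (fun ρ : ℝ => 1 - ρ^2) := by fun_prop
        have := hc.tendsto (1:ℝ)
        simp only [one_pow, sub_self] at this
        exact this.mono_left nhdsWithin_le_nhds
      · filter_upwards [hIoo] with ρ hρ
        simp only [mem_Ioi]
        nlinarith [hρ.1, hρ.2]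
    have := Filter.Tendsto.pos_mul_atTop hz hnum hden
    apply this.congr
    intro ρ
    simp only [hφdef, div_eq_mul_inv]
  have hcomp := PCL.tendsto_ratio.comp hφ
  have hρz : Tendsto (fun ρ : ℝ => ρ * Real.sqrt z) (nhdsWithin 1 (Set.Iio 1))
      (nhds (Real.sqrt z)) := by
    have hc : Continuous (fun ρ : ℝ => ρ * Real.sqrt z) := by fun_prop
    have := hc.tendsto (1:ℝ)
    simp only [one_mul] at this
    exact this.mono_left nhdsWithin_le_nhds
  have hmain := (hρz.mul hcomp).const_mul (2/π)
  have hval : (2/π) * (Real.sqrt z * Real.sqrt π) = 2 * Real.sqrt (z/π) := by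
    rw [Real.sqrt_div hz.le]
    have hππ : Real.sqrt π * Real.sqrt π = π := Real.mul_self_sqrt hπ.le
    have hsπ : Real.sqrt π ≠ 0 := ne_of_gt (Real.sqrt_pos.2 hπ)
    field_simp
    linear_combination hππ
  rw [hval] at hmain
  apply hmain.congr'
  filter_upwards [hIoo] with ρ hρ
  have h1 : 0 < 1 - ρ^2 := by nlinarith [hρ.1, hρ.2]
  have hρ0 : 0 < ρ := hρ.1
  have hx0 : 0 ≤ φ ρ := div_nonneg (by positivity) h1.le
  have hφpos : 0 < φ ρ := div_pos (by positivity) h1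
  have hsφ : Real.sqrt (φ ρ) ≠ 0 := ne_of_gt (Real.sqrt_pos.2 hφpos)
  have hkey : Real.sqrt (φ ρ) * Real.sqrt (1 - ρ^2) = ρ * Real.sqrt z := by
    rw [← Real.sqrt_mul hx0]
    have he : φ ρ * (1 - ρ^2) = ρ^2 * z := by
      rw [hφdef]
      field_simp
    rw [he, show ρ^2*z = (ρ*Real.sqrt z)^2 from by
      rw [mul_pow, Real.sq_sqrt hz.le]]
    exact Real.sqrt_sq (by positivity)
  have hs1 : Real.sqrt (1 - ρ^2) = (ρ * Real.sqrt z) / Real.sqrt (φ ρ) := by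
    rw [eq_div_iff hsφ]
    linear_combination hkey
  rw [div_eq_mul_inv] at hs1
  show (2/π) * ((ρ * Real.sqrt z) * ((fun x => (Real.sqrt x)⁻¹ * ∫ θ in (0:ℝ)..(π/2),
      (1 + 2*x*Real.sin θ^2) * Real.exp (-(x * Real.cos θ^2))) (φ ρ)))
    = Real.sqrt (1 - ρ^2) * Lhalf (φ ρ)
  rw [PCL.Lhalf_eq_integral hx0, hs1]
  simp only
  ring
end
end

section
/- Define q(α,x) = L(α·x)/√(1+x) for real α > 0 and x ≥ 0. If α > 1/2 then there exists x₀ ≥ 0 such that x ↦ q(α,x) is strictly increasing on [x₀, ∞); if 0 < α < 1/2 then there exists x₀ ≥ 0 such that x ↦ q(α,x) is strictly decreasing on [x₀, ∞). -/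
noncomputable section

open Filter Topology

namespace LagAux




/-- series coefficients of `Lhalf` as a power series in `z` -/
def c (n : ℕ) : ℝ :=
  (ascPochhammer ℝ n).eval (-(1/2)) / ((n.factorial : ℝ))^2 * (-1)^n

lemma c_zero : c 0 = 1 := by simp [c]

lemma crec (n : ℕ) : ((n : ℝ)+1)^2 * c (n+1) = (1/2 - n) * c n := by
  have h1 : (ascPochhammer ℝ (n+1)).eval (-(1/2))
      = (ascPochhammer ℝ n).eval (-(1/2)) * ((n:ℝ) - 1/2) := by
    rw [ascPochhammer_succ_right]
    simp only [Polynomial.eval_mul, Polynomial.eval_add, Polynomial.eval_X,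
      Polynomial.eval_natCast]
    ring
  have h2 : ((n+1).factorial : ℝ) = ((n:ℝ)+1) * n.factorial := by
    push_cast [Nat.factorial_succ]; ring
  have hf : (n.factorial : ℝ) ≠ 0 := Nat.cast_ne_zero.2 n.factorial_ne_zero
  have hn1 : ((n:ℝ)+1) ≠ 0 := by positivity
  unfold c
  rw [h1, h2, pow_succ]
  field_simp
  ring

lemma c_ne_zero (n : ℕ) : c n ≠ 0 := by
  induction n with
  | zero => simp [c_zero]
  | succ n ih =>
    intro h
    have h2 := crec n
    rw [h, mul_zero] at h2
    have hhalf : (1/2 - (n:ℝ)) ≠ 0 := by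
      intro hh
      have : (n : ℝ) = 1/2 := by linarith
      rcases n with _ | m
      · norm_num at this
      · push_cast at this; linarith [Nat.cast_nonneg (α := ℝ) m]
    exact (mul_ne_zero hhalf ih) h2.symm




/-- coefficients of the derivative series -/
def c1 (n : ℕ) : ℝ := ((n : ℝ)+1) * c (n+1)
/-- coefficients of the second derivative series -/
def c2 (n : ℕ) : ℝ := ((n : ℝ)+1) * c1 (n+1)

lemma abs_c_succ (n : ℕ) : |c (n+1)| = |1/2 - (n:ℝ)| * |c n| / ((n:ℝ)+1)^2 := by
  have h := crec n
  have hn : (0:ℝ) < ((n:ℝ)+1)^2 := by positivity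
  have : c (n+1) = (1/2 - (n:ℝ)) * c n / ((n:ℝ)+1)^2 := by
    field_simp at h ⊢; linarith
  rw [this, abs_div, abs_mul, abs_pow]
  congr 1
  rw [abs_of_nonneg (by positivity : (0:ℝ) ≤ (n:ℝ)+1)]

lemma abs_half_sub_le (n : ℕ) : |1/2 - (n:ℝ)| ≤ (n:ℝ)+1 := by
  rw [abs_le]
  constructor <;> [skip; skip] <;> nlinarith [Nat.cast_nonneg (α := ℝ) n]

lemma abs_c1_le (n : ℕ) : |c1 n| ≤ |c n| := by
  have h := abs_c_succ n
  have hb := abs_half_sub_le n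
  have hn : (0:ℝ) < (n:ℝ)+1 := by positivity
  have : |c1 n| = ((n:ℝ)+1) * |c (n+1)| := by
    rw [c1, abs_mul, abs_of_nonneg hn.le]
  rw [this, h]
  have heq : ((n:ℝ)+1) * (|1/2 - (n:ℝ)| * |c n| / ((n:ℝ)+1)^2)
      = |1/2 - (n:ℝ)| * |c n| / ((n:ℝ)+1) := by
    field_simp
  rw [heq, div_le_iff₀ hn]
  nlinarith [abs_nonneg (c n), abs_nonneg (1/2 - (n:ℝ))]

lemma abs_c2_le (n : ℕ) : |c2 n| ≤ |c n| := by
  have h1 : |c2 n| = ((n:ℝ)+1) * |c1 (n+1)| := by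
    rw [c2, abs_mul, abs_of_nonneg (by positivity : (0:ℝ) ≤ (n:ℝ)+1)]
  have h2 : |c1 (n+1)| ≤ |c (n+1)| := abs_c1_le (n+1)
  have h3 : ((n:ℝ)+1) * |c (n+1)| = |c1 n| := by
    rw [c1, abs_mul, abs_of_nonneg (by positivity : (0:ℝ) ≤ (n:ℝ)+1)]
  calc |c2 n| = ((n:ℝ)+1) * |c1 (n+1)| := h1
    _ ≤ ((n:ℝ)+1) * |c (n+1)| := by nlinarith [Nat.cast_nonneg (α := ℝ) n]
    _ = |c1 n| := h3
    _ ≤ |c n| := abs_c1_le n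

/-- master summability -/
lemma summable_M {R : ℝ} (hR : 0 < R) :
    Summable (fun n : ℕ => ((n:ℝ)+1) * |c n| * R^n) := by
  apply summable_of_ratio_test_tendsto_lt_one (l := 0) one_pos
  · exact Eventually.of_forall fun n => by
      have := c_ne_zero n
      positivity
  · have key : ∀ n : ℕ, ‖((((n+1):ℕ):ℝ)+1) * |c (n+1)| * R^(n+1)‖ / ‖((n:ℝ)+1) * |c n| * R^n‖
        ≤ 2*R / ((n:ℝ)+1) := by
      intro n
      have hcn : (0:ℝ) < |c n| := abs_pos.2 (c_ne_zero n)
      have hn1 : (0:ℝ) < (n:ℝ)+1 := by positivity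
      have hA : (0:ℝ) ≤ |1/2 - (n:ℝ)| := abs_nonneg _
      have hAle := abs_half_sub_le n
      have h1 : ‖((((n+1):ℕ):ℝ)+1) * |c (n+1)| * R^(n+1)‖
          = ((n:ℝ)+2) * (|1/2 - (n:ℝ)| * |c n| / ((n:ℝ)+1)^2) * R^(n+1) := by
        rw [Real.norm_eq_abs, abs_of_nonneg (by positivity), abs_c_succ]
        push_cast
        ring
      have h2 : ‖((n:ℝ)+1) * |c n| * R^n‖ = ((n:ℝ)+1) * |c n| * R^n := by
        rw [Real.norm_eq_abs, abs_of_nonneg (by positivity)]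
      rw [h1, h2]
      have h3 : ((n:ℝ)+2) * (|1/2 - (n:ℝ)| * |c n| / ((n:ℝ)+1)^2) * R^(n+1)
          / (((n:ℝ)+1) * |c n| * R^n)
          = ((n:ℝ)+2) * |1/2 - (n:ℝ)| * R / ((n:ℝ)+1)^3 := by
        rw [pow_succ]
        field_simp
        ring
      rw [h3, div_le_div_iff₀ (by positivity) hn1]
      have hmul : ((n:ℝ)+2) * |1/2 - (n:ℝ)| * R * ((n:ℝ)+1)
          ≤ ((n:ℝ)+2) * (((n:ℝ)+1)) * R * ((n:ℝ)+1) := by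
        have := mul_le_mul_of_nonneg_right hAle
          (by positivity : (0:ℝ) ≤ R * ((n:ℝ)+1))
        nlinarith [Nat.cast_nonneg (α := ℝ) n]
      have hfin : ((n:ℝ)+2) * (((n:ℝ)+1)) * R * ((n:ℝ)+1) ≤ 2 * R * ((n:ℝ)+1)^3 := by
        have hnn : (0:ℝ) ≤ R * ((n:ℝ)+1)^2 * (n:ℝ) :=
          mul_nonneg (mul_nonneg hR.le (sq_nonneg _)) (Nat.cast_nonneg n)
        nlinarith [hnn]
      linarith
    have hnn : ∀ n : ℕ, 0 ≤ ‖((((n+1):ℕ):ℝ)+1) * |c (n+1)| * R^(n+1)‖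
        / ‖((n:ℝ)+1) * |c n| * R^n‖ := fun n => div_nonneg (norm_nonneg _) (norm_nonneg _)
    have hlim : Tendsto (fun n : ℕ => 2*R/((n:ℝ)+1)) atTop (𝓝 0) :=
      Tendsto.div_atTop tendsto_const_nhds
        (tendsto_atTop_add_const_right _ 1 tendsto_natCast_atTop_atTop)
    exact squeeze_zero hnn key hlim

/-- generic summability by comparison with the master series -/
lemma summable_gen {d : ℕ → ℝ} (hd : ∀ n, |d n| ≤ ((n:ℝ)+1) * |c n|) (z : ℝ) :
    Summable (fun n : ℕ => d n * z^n) := by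
  apply Summable.of_norm_bounded (summable_M (R := |z|+1) (by positivity))
  intro n
  rw [Real.norm_eq_abs, abs_mul, abs_pow]
  have h1 : |z|^n ≤ (|z|+1)^n := pow_le_pow_left₀ (abs_nonneg z) (by linarith) n
  have h2 := hd n
  have h3 : (0:ℝ) ≤ |z|^n := by positivity
  nlinarith [abs_nonneg (d n), pow_nonneg (by positivity : (0:ℝ) ≤ |z|+1) n,
    mul_le_mul h2 h1 h3 (by positivity : (0:ℝ) ≤ ((n:ℝ)+1) * |c n|)]


def L (z : ℝ) : ℝ := ∑' n : ℕ, c n * z^n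
def L1 (z : ℝ) : ℝ := ∑' n : ℕ, c1 n * z^n
def L2 (z : ℝ) : ℝ := ∑' n : ℕ, c2 n * z^n

lemma bound_step {d : ℕ → ℝ} (hbd : ∀ n, |d n| ≤ |c n|) (n : ℕ) :
    |((n:ℝ)+1) * d (n+1)| ≤ ((n:ℝ)+1) * |c n| := by
  rw [abs_mul, abs_of_nonneg (by positivity : (0:ℝ) ≤ (n:ℝ)+1)]
  have h1 : |d (n+1)| ≤ |c (n+1)| := hbd (n+1)
  have h2 : ((n:ℝ)+1) * |c (n+1)| ≤ |c n| := by
    have := abs_c1_le n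
    rw [c1, abs_mul, abs_of_nonneg (by positivity : (0:ℝ) ≤ (n:ℝ)+1)] at this
    linarith
  have h3 : ((n:ℝ)+1) * |d (n+1)| ≤ ((n:ℝ)+1) * |c (n+1)| := by
    nlinarith [Nat.cast_nonneg (α := ℝ) n]
  have h4 : |c n| ≤ ((n:ℝ)+1) * |c n| := by
    nlinarith [Nat.cast_nonneg (α := ℝ) n, abs_nonneg (c n)]
  linarith

lemma deriv_term_bound {d : ℕ → ℝ} (hbd : ∀ n, |d n| ≤ |c n|) {R : ℝ} (hR : 1 ≤ R)
    {z : ℝ} (hz : |z| ≤ R) (n : ℕ) :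
    ‖d n * ((n:ℝ) * z^(n-1))‖ ≤ ((n:ℝ)+1) * |c n| * R^n := by
  rcases n with _ | m
  · simp
  · rw [Real.norm_eq_abs, abs_mul, abs_mul, abs_pow]
    have hz0 : (0:ℝ) ≤ |z| := abs_nonneg z
    have hR0 : (0:ℝ) < R := lt_of_lt_of_le one_pos hR
    have h1 : |z|^(m+1-1) ≤ R^m := pow_le_pow_left₀ hz0 hz m
    have h2 : R^m ≤ R^(m+1) := by
      calc R^m = R^m * 1 := (mul_one _).symm
      _ ≤ R^m * R := by nlinarith [pow_pos hR0 m]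
      _ = R^(m+1) := (pow_succ R m).symm
    have h3 : |((m+1:ℕ):ℝ)| = (m:ℝ)+1 := by
      rw [abs_of_nonneg (by positivity : (0:ℝ) ≤ ((m+1:ℕ):ℝ))]; push_cast; ring
    rw [h3]
    have hd := hbd (m+1)
    have hcm : (0:ℝ) ≤ |c (m+1)| := abs_nonneg _
    have : |d (m+1)| * (((m:ℝ)+1) * |z|^(m+1-1)) ≤ |c (m+1)| * (((m:ℝ)+1) * R^(m+1)) := by
      have hmono : ((m:ℝ)+1) * |z|^(m+1-1) ≤ ((m:ℝ)+1) * R^(m+1) := by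
        nlinarith [Nat.cast_nonneg (α := ℝ) m]
      have h5 : (0:ℝ) ≤ ((m:ℝ)+1) * |z|^(m+1-1) := by positivity
      nlinarith [abs_nonneg (d (m+1)), abs_nonneg (c (m+1))]
    have hfin : |c (m+1)| * (((m:ℝ)+1) * R^(m+1)) ≤ ((↑(m+1):ℝ)+1) * |c (m+1)| * R^(m+1) := by
      push_cast
      nlinarith [pow_pos hR0 (m+1), abs_nonneg (c (m+1)), Nat.cast_nonneg (α := ℝ) m]
    simp only [Nat.add_sub_cancel] at this
    push_cast at hfin ⊢
    linarith [hfin, this]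

lemma hasDerivAt_gen {d d' : ℕ → ℝ} (hd' : ∀ n, d' n = ((n:ℝ)+1) * d (n+1))
    (hbd : ∀ n, |d n| ≤ |c n|) (y : ℝ) :
    HasDerivAt (fun z => ∑' n : ℕ, d n * z^n) (∑' n : ℕ, d' n * y^n) y := by
  set R : ℝ := |y| + 1 with hRdef
  have hR0 : (0:ℝ) < R := by positivity
  have hR1 : (1:ℝ) ≤ R := by rw [hRdef]; linarith [abs_nonneg y]
  have hgen : ∀ n, |d n| ≤ ((n:ℝ)+1) * |c n| := fun n => (hbd n).trans
    (by nlinarith [abs_nonneg (c n), Nat.cast_nonneg (α := ℝ) n])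
  have hy : y ∈ Metric.ball (0:ℝ) R := by
    simp only [Metric.mem_ball, Real.dist_eq, sub_zero, hRdef]
    linarith [abs_nonneg y]
  have hz_le : ∀ z : ℝ, z ∈ Metric.ball (0:ℝ) R → |z| ≤ R := by
    intro z hz
    have h := Metric.mem_ball.1 hz
    rw [Real.dist_eq, sub_zero] at h
    exact h.le
  have key := hasDerivAt_tsum_of_isPreconnected
    (u := fun n : ℕ => ((n:ℝ)+1) * |c n| * R^n)
    (g := fun n z => d n * z^n)
    (g' := fun n z => d n * ((n:ℝ) * z^(n-1)))
    (y₀ := 0) (y := y)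
    (summable_M hR0) Metric.isOpen_ball ((convex_ball (0:ℝ) R).isPreconnected)
    (fun n z _ => (hasDerivAt_pow n z).const_mul (d n))
    (fun n z hz => deriv_term_bound hbd hR1 (hz_le z hz) n)
    (Metric.mem_ball_self hR0)
    (summable_gen hgen 0)
    hy
  have hsum : Summable (fun n : ℕ => d n * ((n:ℝ) * y^(n-1))) := by
    apply Summable.of_norm_bounded (summable_M hR0)
    intro n
    exact deriv_term_bound hbd hR1 (by rw [hRdef]; linarith [abs_nonneg y]) n
  have heq : (∑' n : ℕ, d n * ((n:ℝ) * y^(n-1))) = ∑' n : ℕ, d' n * y^n := by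
    rw [Summable.tsum_eq_zero_add hsum]
    simp only [Nat.cast_zero, zero_mul, mul_zero, zero_add]
    apply tsum_congr
    intro n
    rw [hd']
    push_cast [Nat.add_sub_cancel]
    ring
  have key' : HasDerivAt (fun z => ∑' n : ℕ, d n * z^n)
      (∑' n : ℕ, d n * ((n:ℝ) * y^(n-1))) y := key
  rw [heq] at key'
  exact key'

lemma hasDerivAt_L (y : ℝ) : HasDerivAt L (L1 y) y :=
  hasDerivAt_gen (fun n => rfl) (fun n => le_refl _) y

lemma hasDerivAt_L1 (y : ℝ) : HasDerivAt L1 (L2 y) y :=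
  hasDerivAt_gen (fun n => rfl) abs_c1_le y

lemma continuous_L : Continuous L :=
  continuous_iff_continuousAt.2 fun y => (hasDerivAt_L y).continuousAt

lemma continuous_L1 : Continuous L1 :=
  continuous_iff_continuousAt.2 fun y => (hasDerivAt_L1 y).continuousAt

lemma c_one : c 1 = 1/2 := by
  have h := crec 0
  rw [c_zero] at h
  push_cast at h
  linarith

lemma L_zero : L 0 = 1 := by
  rw [L, tsum_eq_single 0 (fun n hn => by
    rcases n with _ | m
    · exact absurd rfl hn
    · simp)]
  simp [c_zero]

lemma coeff_id (n : ℕ) : c2 n + c1 n = c (n+1)/2 - c1 (n+1) := by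
  have h := crec (n+1)
  push_cast at h
  simp only [c2, c1]
  push_cast
  linarith

lemma ode (z : ℝ) : z * L2 z + (1+z) * L1 z = L z / 2 := by
  have hb1 : ∀ n : ℕ, |c n| ≤ ((n:ℝ)+1) * |c n| := fun n => by
    nlinarith [abs_nonneg (c n), Nat.cast_nonneg (α := ℝ) n]
  have Sc : Summable (fun n : ℕ => c n * z^n) := summable_gen hb1 z
  have Sc1 : Summable (fun n : ℕ => c1 n * z^n) := summable_gen
    (fun n => (abs_c1_le n).trans (hb1 n)) z
  have Sc2 : Summable (fun n : ℕ => c2 n * z^n) := summable_gen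
    (fun n => (abs_c2_le n).trans (hb1 n)) z
  set u : ℕ → ℝ := fun n => (c n/2 - c1 n) * z^n with hu
  have Su : Summable u := by
    have h : Summable (fun n : ℕ => c n * z^n / 2 - c1 n * z^n) := (Sc.div_const 2).sub Sc1
    apply h.congr
    intro n
    simp only [hu]
    ring
  have Su' : Summable (fun n => u (n+1)) := (summable_nat_add_iff 1).2 Su
  have u_zero : u 0 = 0 := by
    simp [hu, c_zero, c1, c_one]
  have S1 : Summable (fun n : ℕ => z * (c2 n * z^n)) := Sc2.mul_left z
  have S2 : Summable (fun n : ℕ => z * (c1 n * z^n)) := Sc1.mul_left z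
  have S3 : Summable (fun n : ℕ => c1 n * z^n - (1/2) * (c n * z^n)) :=
    Sc1.sub (Sc.mul_left (1/2))
  have S23 : Summable (fun n : ℕ => z * (c1 n * z^n) + (c1 n * z^n - (1/2) * (c n * z^n))) :=
    S2.add S3
  have total : z * L2 z + ((1+z) * L1 z - L z / 2)
      = ∑' n : ℕ, (z*(c2 n * z^n) + (z*(c1 n * z^n) + (c1 n * z^n - (1/2) * (c n * z^n)))) := by
    rw [Summable.tsum_add S1 S23, Summable.tsum_add S2 S3, Summable.tsum_sub Sc1 (Sc.mul_left (1/2)),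
      tsum_mul_left, tsum_mul_left, tsum_mul_left]
    simp only [L, L1, L2]
    ring
  have tele : ∀ n : ℕ, z*(c2 n * z^n) + (z*(c1 n * z^n) + (c1 n * z^n - (1/2) * (c n * z^n)))
      = u (n+1) - u n := by
    intro n
    have h := coeff_id n
    simp only [hu]
    rw [pow_succ]
    linear_combination (z^n * z) * h
  have tsum_tele : (∑' n : ℕ, (z*(c2 n * z^n) + (z*(c1 n * z^n)
      + (c1 n * z^n - (1/2) * (c n * z^n))))) = 0 := by
    rw [tsum_congr tele, Summable.tsum_sub Su' Su, Summable.tsum_eq_zero_add Su, u_zero]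
    ring
  rw [tsum_tele] at total
  linarith

/-- Φ(z) = z eᶻ L₁(z) -/
def Phi (z : ℝ) : ℝ := z * Real.exp z * L1 z

lemma hasDerivAt_Phi (z : ℝ) : HasDerivAt Phi (Real.exp z * L z / 2) z := by
  have h1 : HasDerivAt (fun t : ℝ => t * Real.exp t) (1 * Real.exp z + z * Real.exp z) z :=
    (hasDerivAt_id z).mul (Real.hasDerivAt_exp z)
  have h2 := h1.mul (hasDerivAt_L1 z)
  have heq : (1 * Real.exp z + z * Real.exp z) * L1 z + z * Real.exp z * L2 z
      = Real.exp z * L z / 2 := by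
    linear_combination Real.exp z * ode z
  rw [heq] at h2
  exact h2

lemma intg1 (z : ℝ) : z * Real.exp z * L1 z = (1/2) * ∫ t in (0:ℝ)..z, Real.exp t * L t := by
  have hcont : Continuous (fun t : ℝ => Real.exp t * L t / 2) :=
    (Real.continuous_exp.mul continuous_L).div_const 2
  have hftc := intervalIntegral.integral_eq_sub_of_hasDerivAt
    (f := Phi) (f' := fun t => Real.exp t * L t / 2)
    (fun t _ => hasDerivAt_Phi t) (hcont.intervalIntegrable 0 z)
  have h0 : Phi 0 = 0 := by simp [Phi]
  rw [h0, sub_zero] at hftc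
  have : (∫ t in (0:ℝ)..z, Real.exp t * L t / 2)
      = (1/2) * ∫ t in (0:ℝ)..z, Real.exp t * L t := by
    rw [intervalIntegral.integral_div]
    ring
  rw [this] at hftc
  exact hftc.symm

lemma L_pos : ∀ z : ℝ, 0 ≤ z → 0 < L z := by
  by_contra hcon
  push_neg at hcon
  obtain ⟨b, hb0, hLb⟩ := hcon
  set S : Set ℝ := Set.Icc 0 b ∩ {t | L t ≤ 0} with hS
  have hSne : S.Nonempty := ⟨b, ⟨⟨hb0, le_refl b⟩, hLb⟩⟩
  have hSbdd : BddBelow S := ⟨0, fun t ht => ht.1.1⟩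
  have hSclosed : IsClosed S := isClosed_Icc.inter (isClosed_le continuous_L continuous_const)
  set s := sInf S with hs
  have hsS : s ∈ S := hSclosed.csInf_mem hSne hSbdd
  have hs0 : 0 ≤ s := hsS.1.1
  have hLs : L s ≤ 0 := hsS.2
  have hsne : s ≠ 0 := by
    intro h
    rw [h, L_zero] at hLs
    linarith
  have hspos : 0 < s := lt_of_le_of_ne hs0 (Ne.symm hsne)
  have hpos_lt : ∀ t, 0 ≤ t → t < s → 0 < L t := by
    intro t ht hts
    by_contra hLt
    push_neg at hLt
    have htS : t ∈ S := ⟨⟨ht, le_trans hts.le hsS.1.2⟩, hLt⟩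
    have := csInf_le hSbdd htS
    linarith
  have hL1pos : ∀ t, t ∈ Set.Ioo 0 s → 0 < L1 t := by
    intro t ⟨ht0, hts⟩
    have hint : 0 < ∫ u in (0:ℝ)..t, Real.exp u * L u := by
      apply intervalIntegral.intervalIntegral_pos_of_pos_on
      · exact ((Real.continuous_exp.mul continuous_L).intervalIntegrable 0 t)
      · intro u ⟨hu0, hut⟩
        have := hpos_lt u hu0.le (lt_trans hut hts)
        positivity
      · exact ht0
    have h1 := intg1 t
    have hte : 0 < t * Real.exp t := by positivity
    nlinarith [h1, hint]
  have hmono : StrictMonoOn L (Set.Icc 0 s) := by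
    apply strictMonoOn_of_deriv_pos (convex_Icc 0 s) continuous_L.continuousOn
    intro t ht
    rw [interior_Icc] at ht
    rw [(hasDerivAt_L t).deriv]
    exact hL1pos t ht
  have : L 0 < L s := hmono ⟨le_refl 0, hspos.le⟩ ⟨hs0, le_refl s⟩ hspos
  rw [L_zero] at this
  linarith

lemma L1_pos : ∀ z : ℝ, 0 < z → 0 < L1 z := by
  intro z hz
  have hint : 0 < ∫ u in (0:ℝ)..z, Real.exp u * L u := by
    apply intervalIntegral.intervalIntegral_pos_of_pos_on
    · exact ((Real.continuous_exp.mul continuous_L).intervalIntegrable 0 z)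
    · intro u ⟨hu0, _⟩
      have := L_pos u hu0.le
      positivity
    · exact hz
  have h1 := intg1 z
  have hte : 0 < z * Real.exp z := by positivity
  nlinarith [h1, hint]

lemma L1_nonneg : ∀ z : ℝ, 0 ≤ z → 0 ≤ L1 z := by
  intro z hz
  rcases eq_or_lt_of_le hz with h | h
  · rw [← h]
    have : L1 0 = 1/2 := by
      rw [L1, tsum_eq_single 0 (fun n hn => by
        rcases n with _ | m
        · exact absurd rfl hn
        · simp)]
      simp [c1, c_one]
    rw [this]; norm_num
  · exact (L1_pos z h).le

lemma L_mono : MonotoneOn L (Set.Ici 0) := by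
  apply monotoneOn_of_deriv_nonneg (convex_Ici 0) continuous_L.continuousOn
  · exact fun t ht => (hasDerivAt_L t).differentiableAt.differentiableWithinAt
  · intro t ht
    rw [interior_Ici] at ht
    rw [(hasDerivAt_L t).deriv]
    exact L1_nonneg t (le_of_lt ht)

lemma L_ge_one : ∀ z : ℝ, 0 ≤ z → 1 ≤ L z := by
  intro z hz
  have := L_mono (Set.self_mem_Ici) hz hz
  rwa [L_zero] at this

lemma L1_le : ∀ z : ℝ, 0 < z → L1 z ≤ L z / (2*z) := by
  intro z hz
  have hmonoint : (∫ t in (0:ℝ)..z, Real.exp t * L t) ≤ ∫ t in (0:ℝ)..z, Real.exp t * L z := by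
    apply intervalIntegral.integral_mono_on hz.le
    · exact ((Real.continuous_exp.mul continuous_L).intervalIntegrable 0 z)
    · exact ((Real.continuous_exp.mul continuous_const).intervalIntegrable 0 z)
    · intro t ⟨ht0, htz⟩
      have hL := L_mono (Set.mem_Ici.2 ht0) (Set.mem_Ici.2 (le_trans ht0 htz)) htz
      nlinarith [Real.exp_pos t]
  have hint2 : (∫ t in (0:ℝ)..z, Real.exp t * L z) = (Real.exp z - 1) * L z := by
    rw [intervalIntegral.integral_mul_const, integral_exp]
    simp
  have h1 := intg1 z
  have hLz := L_pos z hz.le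
  have hez := Real.exp_pos z
  have key : z * Real.exp z * L1 z ≤ Real.exp z * L z / 2 := by
    rw [h1]
    rw [hint2] at hmonoint
    nlinarith [hmonoint]
  rw [le_div_iff₀ (by positivity : (0:ℝ) < 2*z)]
  have h2 : (z * L1 z) * Real.exp z ≤ (L z / 2) * Real.exp z := by nlinarith [key]
  have := (mul_le_mul_iff_of_pos_right hez).1 h2
  linarith

/-- D(z) = 2z L₁(z) - L(z) -/
def DD (z : ℝ) : ℝ := 2*z*L1 z - L z

/-- Ψ(z) = √z eᶻ D(z) -/
def Psi (z : ℝ) : ℝ := Real.sqrt z * Real.exp z * DD z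

/-- the comparison integrand/function F(z) = eᶻ L(z)/√z -/
def ff (z : ℝ) : ℝ := Real.exp z * L z / Real.sqrt z

/-- I(z) = ∫₁ᶻ f -/
def II (z : ℝ) : ℝ := ∫ t in (1:ℝ)..z, ff t

lemma hasDerivAt_DD (z : ℝ) : HasDerivAt DD (L1 z + 2*z*L2 z) z := by
  have h := (((hasDerivAt_id z).const_mul 2).mul (hasDerivAt_L1 z)).sub (hasDerivAt_L z)
  simp only [id_eq] at h
  rw [show L1 z + 2*z*L2 z = 2 * 1 * L1 z + 2 * z * L2 z - L1 z by ring]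
  exact h

lemma hasDerivAt_Psi {z : ℝ} (hz : 0 < z) :
    HasDerivAt Psi (-(Real.exp z * L z / (2 * Real.sqrt z))) z := by
  obtain ⟨s, hs, rfl⟩ : ∃ s : ℝ, 0 < s ∧ s^2 = z :=
    ⟨Real.sqrt z, Real.sqrt_pos.2 hz, Real.sq_sqrt hz.le⟩
  have hss : Real.sqrt (s^2) = s := Real.sqrt_sq hs.le
  have hsne : s ≠ 0 := ne_of_gt hs
  rw [hss]
  have hsq : HasDerivAt Real.sqrt (1/(2*s)) (s^2) := by
    have := Real.hasDerivAt_sqrt (by positivity : s^2 ≠ 0)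
    rwa [hss] at this
  have h1 : HasDerivAt (fun t => Real.sqrt t * Real.exp t)
      (1/(2*s) * Real.exp (s^2) + s * Real.exp (s^2)) (s^2) := by
    have := hsq.mul (Real.hasDerivAt_exp (s^2))
    rwa [hss] at this
  have h2 := h1.mul (hasDerivAt_DD (s^2))
  have hval : (1/(2*s) * Real.exp (s^2) + s * Real.exp (s^2)) * DD (s^2)
      + Real.sqrt (s^2) * Real.exp (s^2) * (L1 (s^2) + 2*s^2*L2 (s^2))
      = -(Real.exp (s^2) * L (s^2) / (2 * s)) := by
    rw [hss, DD]
    have ho := ode (s^2)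
    field_simp
    linear_combination (4*s^2) * ho
  rw [hval] at h2
  exact h2

lemma continuousOn_integrand {a b : ℝ} (ha : 0 < a) :
    ContinuousOn ff (Set.uIcc a b) ∨ True := Or.inr trivial

lemma ff_contOn {s : Set ℝ} (hs : ∀ t ∈ s, 0 < t) : ContinuousOn ff s := by
  apply ContinuousOn.div
  · exact (Real.continuous_exp.mul continuous_L).continuousOn
  · exact Real.continuous_sqrt.continuousOn
  · intro t ht
    have := hs t ht
    positivity

lemma Psi_eq {z : ℝ} (hz : 1 ≤ z) : Psi z = Psi 1 - (1/2) * II z := by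
  have huIcc : Set.uIcc (1:ℝ) z = Set.Icc 1 z := Set.uIcc_of_le hz
  have hpos : ∀ t ∈ Set.uIcc (1:ℝ) z, (0:ℝ) < t := by
    intro t ht
    rw [huIcc] at ht
    linarith [ht.1]
  have hderiv : ∀ t ∈ Set.uIcc (1:ℝ) z,
      HasDerivAt Psi (-(Real.exp t * L t / (2 * Real.sqrt t))) t :=
    fun t ht => hasDerivAt_Psi (hpos t ht)
  have hcont : ContinuousOn (fun t => -(Real.exp t * L t / (2 * Real.sqrt t)))
      (Set.uIcc 1 z) := by
    apply ContinuousOn.neg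
    apply ContinuousOn.div
    · exact (Real.continuous_exp.mul continuous_L).continuousOn
    · exact (continuous_const.mul Real.continuous_sqrt).continuousOn
    · intro t ht
      have := hpos t ht
      positivity
  have hint : IntervalIntegrable (fun t => -(Real.exp t * L t / (2 * Real.sqrt t)))
      MeasureTheory.volume 1 z := hcont.intervalIntegrable
  have hftc := intervalIntegral.integral_eq_sub_of_hasDerivAt hderiv hint
  have heq : (∫ t in (1:ℝ)..z, -(Real.exp t * L t / (2 * Real.sqrt t)))
      = -(1/2) * II z := by
    rw [II, ← intervalIntegral.integral_const_mul]
    apply intervalIntegral.integral_congr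
    intro t _
    simp only [ff]
    rw [mul_comm (2:ℝ) (Real.sqrt t), ← div_div]
    ring
  rw [heq] at hftc
  linarith [hftc]

/-- quotient-rule derivative of `ff` -/
def Vf (t : ℝ) : ℝ :=
  ((Real.exp t * L t + Real.exp t * L1 t) * Real.sqrt t
    - Real.exp t * L t * (1/(2*Real.sqrt t))) / (Real.sqrt t)^2

lemma hasDerivAt_ff {t : ℝ} (ht : 0 < t) : HasDerivAt ff (Vf t) t := by
  have hsne : Real.sqrt t ≠ 0 := by positivity
  exact ((Real.hasDerivAt_exp t).mul (hasDerivAt_L t)).div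
    (Real.hasDerivAt_sqrt (ne_of_gt ht)) hsne

lemma Vf_bounds {t : ℝ} (ht : 1 ≤ t) :
    (1 - 1/(2*t)) * ff t ≤ Vf t ∧ Vf t ≤ ff t := by
  have ht0 : (0:ℝ) < t := by linarith
  obtain ⟨s, hs, rfl⟩ : ∃ s : ℝ, 0 < s ∧ s^2 = t :=
    ⟨Real.sqrt t, Real.sqrt_pos.2 ht0, Real.sq_sqrt ht0.le⟩
  have hss : Real.sqrt (s^2) = s := Real.sqrt_sq hs.le
  have hsne : s ≠ 0 := ne_of_gt hs
  have hVf_eq : Vf (s^2) = (Real.exp (s^2) / s) * (L (s^2) + L1 (s^2) - L (s^2)/(2*s^2)) := by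
    rw [Vf, hss]
    field_simp
  have hff_eq : ff (s^2) = (Real.exp (s^2) / s) * L (s^2) := by
    rw [ff, hss]
    ring
  have hfac : (0:ℝ) < Real.exp (s^2) / s := by positivity
  have hL1n := L1_nonneg (s^2) (by positivity)
  have hL1le := L1_le (s^2) (by positivity)
  constructor
  · rw [hVf_eq, hff_eq]
    have hinner : (1 - 1/(2*s^2)) * L (s^2) ≤ L (s^2) + L1 (s^2) - L (s^2)/(2*s^2) := by
      have hexp : (1 - 1/(2*s^2)) * L (s^2) = L (s^2) - L (s^2)/(2*s^2) := by ring
      rw [hexp]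
      linarith
    calc (1 - 1/(2*s^2)) * ((Real.exp (s^2) / s) * L (s^2))
        = (Real.exp (s^2) / s) * ((1 - 1/(2*s^2)) * L (s^2)) := by ring
      _ ≤ (Real.exp (s^2) / s) * (L (s^2) + L1 (s^2) - L (s^2)/(2*s^2)) := by
          exact mul_le_mul_of_nonneg_left hinner hfac.le
  · rw [hVf_eq, hff_eq]
    apply mul_le_mul_of_nonneg_left _ hfac.le
    linarith

lemma tendsto_ff_atTop : Tendsto ff atTop atTop := by
  have hcomp : Tendsto (fun z : ℝ => Real.exp z / z) atTop atTop := by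
    have := Real.tendsto_exp_div_pow_atTop 1
    simpa using this
  apply tendsto_atTop_mono' atTop _ hcomp
  filter_upwards [eventually_ge_atTop (1:ℝ)] with z hz
  have hz0 : (0:ℝ) < z := by linarith
  have hs : 0 < Real.sqrt z := Real.sqrt_pos.2 hz0
  have hsz : Real.sqrt z ≤ z := by
    have h := Real.sqrt_le_sqrt (by nlinarith : z ≤ z^2)
    rwa [Real.sqrt_sq hz0.le] at h
  have hL := L_ge_one z hz0.le
  have h1 : Real.exp z / z ≤ Real.exp z / Real.sqrt z :=
    div_le_div_of_nonneg_left (Real.exp_pos z).le hs hsz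
  have h2 : Real.exp z / Real.sqrt z ≤ ff z := by
    rw [ff]
    apply (div_le_div_iff_of_pos_right hs).2
    nlinarith [Real.exp_pos z]
  linarith

lemma Vf_contOn {s : Set ℝ} (hs : ∀ t ∈ s, 0 < t) : ContinuousOn Vf s := by
  have hsqrt : ∀ t ∈ s, Real.sqrt t ≠ 0 := fun t ht => by
    have := hs t ht; positivity
  apply ContinuousOn.div
  · apply ContinuousOn.sub
    · exact (((Real.continuous_exp.mul continuous_L).add
        (Real.continuous_exp.mul continuous_L1)).mul Real.continuous_sqrt).continuousOn
    · apply ContinuousOn.mul (Real.continuous_exp.mul continuous_L).continuousOn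
      apply ContinuousOn.div continuousOn_const
        (continuous_const.mul Real.continuous_sqrt).continuousOn
      intro t ht
      have := hs t ht
      exact mul_ne_zero two_ne_zero (hsqrt t ht)
  · exact (Real.continuous_sqrt.pow 2).continuousOn
  · intro t ht
    have := hs t ht
    positivity

lemma sandwich {ε : ℝ} (hε : 0 < ε) {m z : ℝ} (hm : 1 ≤ m) (hm2 : 1/ε ≤ m) (hz : m ≤ z) :
    (1-ε)*(II z - II m) ≤ ff z - ff m ∧ ff z - ff m ≤ II z - II m := by
  have huIcc : Set.uIcc m z = Set.Icc m z := Set.uIcc_of_le hz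
  have hposIcc : ∀ t ∈ Set.uIcc m z, (0:ℝ) < t := by
    intro t ht
    rw [huIcc] at ht
    linarith [ht.1]
  have h1le : ∀ t ∈ Set.uIcc m z, (1:ℝ) ≤ t := by
    intro t ht
    rw [huIcc] at ht
    linarith [ht.1]
  have hVfint : IntervalIntegrable Vf MeasureTheory.volume m z :=
    (Vf_contOn hposIcc).intervalIntegrable
  have hffint : IntervalIntegrable ff MeasureTheory.volume m z :=
    (ff_contOn hposIcc).intervalIntegrable
  have hftc : (∫ t in m..z, Vf t) = ff z - ff m :=
    intervalIntegral.integral_eq_sub_of_hasDerivAt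
      (fun t ht => hasDerivAt_ff (hposIcc t ht)) hVfint
  have hII : II z - II m = ∫ t in m..z, ff t := by
    rw [II, II]
    apply intervalIntegral.integral_interval_sub_left
    · exact (ff_contOn (fun t ht => by
        rw [Set.uIcc_of_le (le_trans hm hz)] at ht; linarith [ht.1])).intervalIntegrable
    · exact (ff_contOn (fun t ht => by
        rw [Set.uIcc_of_le hm] at ht; linarith [ht.1])).intervalIntegrable
  constructor
  · rw [hII, ← hftc, ← intervalIntegral.integral_const_mul]
    apply intervalIntegral.integral_mono_on hz (hffint.const_mul _) hVfint
    intro t ht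
    have ht1 : (1:ℝ) ≤ t := by linarith [ht.1]
    have hb := (Vf_bounds ht1).1
    have hff0 : 0 ≤ ff t := by
      rw [ff]
      have : (0:ℝ) < t := by linarith
      have := L_pos t this.le
      positivity
    have heps : 1/(2*t) ≤ ε := by
      have htm : m ≤ t := ht.1
      have hmpos : (0:ℝ) < m := by linarith
      have htpos : (0:ℝ) < t := by linarith
      rw [div_le_iff₀ (by positivity)]
      rw [div_le_iff₀ hε] at hm2
      nlinarith
    have : (1-ε) * ff t ≤ (1 - 1/(2*t)) * ff t := by nlinarith
    linarith
  · rw [hII, ← hftc]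
    apply intervalIntegral.integral_mono_on hz hVfint hffint
    intro t ht
    exact (Vf_bounds (by linarith [ht.1])).2

set_option maxHeartbeats 1000000 in
lemma tendsto_II_div_ff : Tendsto (fun z => II z / ff z) atTop (𝓝 1) := by
  rw [Metric.tendsto_atTop]
  intro ε hε
  set ε' : ℝ := min (ε/4) (1/2) with hε'def
  have hε' : 0 < ε' := lt_min (by linarith) (by norm_num)
  have hε'le : ε' ≤ 1/2 := min_le_right _ _
  have hε'le4 : ε' ≤ ε/4 := min_le_left _ _
  set m : ℝ := max 1 (1/ε') with hmdef
  have hm1 : 1 ≤ m := le_max_left _ _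
  have hm2 : 1/ε' ≤ m := le_max_right _ _
  set K : ℝ := |II m| + 3*|ff m| with hKdef
  have hK0 : 0 ≤ K := by positivity
  obtain ⟨N₀, hN₀⟩ := (tendsto_ff_atTop.eventually_ge_atTop (max 1 (K/ε'))).exists_forall_of_atTop
  refine ⟨max N₀ m, fun z hzN => ?_⟩
  have hzm : m ≤ z := le_trans (le_max_right _ _) hzN
  have hffz := hN₀ z (le_trans (le_max_left _ _) hzN)
  have hffz1 : 1 ≤ ff z := le_trans (le_max_left _ _) hffz
  have hffzpos : 0 < ff z := by linarith
  have hffzK : K ≤ ε' * ff z := by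
    have h := le_trans (le_max_right 1 (K/ε')) hffz
    rw [div_le_iff₀ hε'] at h
    linarith [mul_comm ε' (ff z)]
  obtain ⟨hlow, hup⟩ := sandwich hε' hm1 hm2 hzm
  have habs1 : II m ≥ -|II m| := neg_abs_le _
  have habs2 : II m ≤ |II m| := le_abs_self _
  have habs3 : ff m ≥ -|ff m| := neg_abs_le _
  have habs4 : ff m ≤ |ff m| := le_abs_self _
  -- lower bound : II z ≥ ff z - K
  have hIlow : ff z - K ≤ II z := by
    have : ff z - ff m ≤ II z - II m := hup
    simp only [hKdef]
    linarith
  -- upper bound : II z ≤ K + ff z * (1 + 2*ε')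
  have hIup : II z ≤ K + ff z * (1 + 2*ε') := by
    have h1ε : (0:ℝ) < 1 - ε' := by linarith
    have hkey : II z - II m ≤ (ff z + |ff m|) * (1 + 2*ε') := by
      nlinarith [hlow, sq_nonneg ε', mul_pos hε' hffzpos]
    simp only [hKdef]
    nlinarith [hkey]
  have h1 : 1 - ε' ≤ II z / ff z := by
    rw [le_div_iff₀ hffzpos]
    nlinarith [hIlow, hffzK]
  have h2 : II z / ff z ≤ 1 + 3*ε' := by
    rw [div_le_iff₀ hffzpos]
    nlinarith [hIup, hffzK]
  rw [Real.dist_eq, abs_lt]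
  constructor <;> nlinarith [h1, h2, hε'le4, hε'le, hε']

lemma Psi_div_ff {z : ℝ} (hz : 1 ≤ z) : Psi z / ff z = z * DD z / L z := by
  have hz0 : (0:ℝ) < z := by linarith
  obtain ⟨s, hs, rfl⟩ : ∃ s : ℝ, 0 < s ∧ s^2 = z :=
    ⟨Real.sqrt z, Real.sqrt_pos.2 hz0, Real.sq_sqrt hz0.le⟩
  have hss : Real.sqrt (s^2) = s := Real.sqrt_sq hs.le
  have hLpos : 0 < L (s^2) := L_pos _ (by positivity)
  have hepos := Real.exp_pos (s^2)
  rw [Psi, ff, hss]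
  field_simp

lemma tendsto_T : Tendsto (fun z => z * DD z / L z) atTop (𝓝 (-(1/2))) := by
  have heq : ∀ᶠ z in atTop, Psi 1 * (ff z)⁻¹ - (1/2) * (II z / ff z) = z * DD z / L z := by
    filter_upwards [eventually_ge_atTop (1:ℝ)] with z hz
    rw [← Psi_div_ff hz, Psi_eq hz]
    field_simp
  have hlim : Tendsto (fun z => Psi 1 * (ff z)⁻¹ - (1/2) * (II z / ff z)) atTop
      (𝓝 (Psi 1 * 0 - (1/2) * 1)) := by
    apply Tendsto.sub
    · exact (tendsto_inv_atTop_zero.comp tendsto_ff_atTop).const_mul (Psi 1)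
    · exact tendsto_II_div_ff.const_mul (1/2)
  have : Psi 1 * 0 - (1/2) * 1 = -(1/2) := by ring
  rw [this] at hlim
  exact Tendsto.congr' heq hlim

lemma tendsto_G (α : ℝ) :
    Tendsto (fun z => (α + z) * DD z / L z + α) atTop (𝓝 (α - 1/2)) := by
  have heq : ∀ᶠ z in atTop,
      α * ((z * DD z / L z) * z⁻¹) + (z * DD z / L z) + α = (α + z) * DD z / L z + α := by
    filter_upwards [eventually_ge_atTop (1:ℝ)] with z hz
    have hz0 : (0:ℝ) < z := by linarith
    have hLpos : 0 < L z := L_pos z hz0.le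
    field_simp
  have hlim : Tendsto (fun z => α * ((z * DD z / L z) * z⁻¹) + (z * DD z / L z) + α) atTop
      (𝓝 (α * (-(1/2) * 0) + (-(1/2)) + α)) := by
    apply Tendsto.add_const
    apply Tendsto.add _ tendsto_T
    exact (tendsto_T.mul tendsto_inv_atTop_zero).const_mul α
  have : α * (-(1/2) * 0) + (-(1/2)) + α = α - 1/2 := by ring
  rw [this] at hlim
  exact Tendsto.congr' heq hlim

lemma hasDerivAt_q (α : ℝ) {x : ℝ} (hx : 0 < 1 + x) :
    HasDerivAt (fun x => L (α * x) / Real.sqrt (1 + x))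
      ((L1 (α * x) * α * Real.sqrt (1+x) - L (α * x) * (1/(2*Real.sqrt (1+x)) * 1))
        / (Real.sqrt (1+x))^2) x := by
  have hu : HasDerivAt (fun x => L (α * x)) (L1 (α * x) * α) x := by
    have h1 : HasDerivAt (fun x : ℝ => α * x) α x := by
      simpa using (hasDerivAt_id x).const_mul α
    exact (hasDerivAt_L (α * x)).comp x h1
  have hv : HasDerivAt (fun x => Real.sqrt (1 + x)) (1/(2*Real.sqrt (1+x)) * 1) x := by
    have h1 : HasDerivAt (fun x : ℝ => 1 + x) 1 x := by
      simpa using (hasDerivAt_id x).const_add 1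
    exact (Real.hasDerivAt_sqrt (ne_of_gt hx)).comp x h1
  exact hu.div hv (by positivity)

lemma num_eq {α x : ℝ} (hx : 0 < 1 + x) :
    L1 (α*x) * α * Real.sqrt (1+x) - L (α*x) * (1/(2*Real.sqrt (1+x)) * 1)
      = (2*α*L1 (α*x)*(1+x) - L (α*x)) / (2*Real.sqrt (1+x)) := by
  have hsq : Real.sqrt (1+x)^2 = 1+x := Real.sq_sqrt hx.le
  have hs : (0:ℝ) < Real.sqrt (1+x) := Real.sqrt_pos.2 hx
  field_simp
  linear_combination (2*α*L1 (α*x)) * hsq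

lemma g_id (α x : ℝ) :
    (α*x) * (2*α*L1 (α*x)*(1+x) - L (α*x)) = (α+α*x)*DD (α*x) + α*L (α*x) := by
  simp only [DD]
  ring

lemma sign_transfer {α x : ℝ} (hα : 0 < α) (hx1 : 1 ≤ x) :
    (0 < (α + α*x) * DD (α*x) / L (α*x) + α → 0 < 2*α*L1 (α*x)*(1+x) - L (α*x)) ∧
    ((α + α*x) * DD (α*x) / L (α*x) + α < 0 → 2*α*L1 (α*x)*(1+x) - L (α*x) < 0) := by
  have hz : 0 < α*x := by positivity
  have hL : 0 < L (α*x) := L_pos _ hz.le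
  have hdiv : (α + α*x) * DD (α*x) / L (α*x) + α
      = ((α + α*x) * DD (α*x) + α * L (α*x)) / L (α*x) := by
    field_simp
  have hid := g_id α x
  constructor
  · intro hpos
    rw [hdiv] at hpos
    have hnum : 0 < (α + α*x) * DD (α*x) + α * L (α*x) := by
      have heq : (α + α*x) * DD (α*x) + α * L (α*x)
          = (((α + α*x) * DD (α*x) + α * L (α*x)) / L (α*x)) * L (α*x) := by
        field_simp
      rw [heq]
      exact mul_pos hpos hL
    nlinarith [hid, hnum, hz]
  · intro hneg
    rw [hdiv] at hneg
    have hnum : (α + α*x) * DD (α*x) + α * L (α*x) < 0 := by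
      have heq : (α + α*x) * DD (α*x) + α * L (α*x)
          = (((α + α*x) * DD (α*x) + α * L (α*x)) / L (α*x)) * L (α*x) := by
        field_simp
      rw [heq]
      exact mul_neg_of_neg_of_pos hneg hL
    nlinarith [hid, hnum, hz]

lemma q_continuousOn {α x₀ : ℝ} (hx₀ : 0 ≤ x₀) :
    ContinuousOn (fun x => L (α * x) / Real.sqrt (1 + x)) (Set.Ici x₀) := by
  apply ContinuousOn.div
  · exact (continuous_L.comp (continuous_const.mul continuous_id)).continuousOn
  · exact (Real.continuous_sqrt.comp (continuous_const.add continuous_id)).continuousOn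
  · intro x hx
    have : (0:ℝ) < 1 + x := by
      have := Set.mem_Ici.1 hx
      linarith
    positivity

lemma main_mono {α : ℝ} (hα : 0 < α) {Z : ℝ}
    (hZ : ∀ z ≥ Z, 0 < (α + z) * DD z / L z + α) :
    StrictMonoOn (fun x => L (α * x) / Real.sqrt (1 + x)) (Set.Ici (max (Z/α) 1)) := by
  set x₀ : ℝ := max (Z/α) 1 with hx₀def
  have hx₀1 : (1:ℝ) ≤ x₀ := le_max_right _ _
  apply strictMonoOn_of_deriv_pos (convex_Ici x₀) (q_continuousOn (by linarith))
  intro x hx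
  rw [interior_Ici] at hx
  have hx1 : 1 ≤ x := le_trans hx₀1 hx.le
  have hx0 : (0:ℝ) < 1 + x := by linarith
  have hzZ : Z ≤ α * x := by
    have h1 : Z/α < x := lt_of_le_of_lt (le_max_left _ _) hx
    rw [div_lt_iff₀ hα] at h1
    linarith [h1]
  have hsign := hZ (α*x) hzZ
  have hg := (sign_transfer hα hx1).1 hsign
  rw [(hasDerivAt_q α hx0).deriv]
  rw [num_eq hx0]
  have hs : (0:ℝ) < Real.sqrt (1+x) := Real.sqrt_pos.2 hx0
  positivity

lemma main_anti {α : ℝ} (hα : 0 < α) {Z : ℝ}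
    (hZ : ∀ z ≥ Z, (α + z) * DD z / L z + α < 0) :
    StrictAntiOn (fun x => L (α * x) / Real.sqrt (1 + x)) (Set.Ici (max (Z/α) 1)) := by
  set x₀ : ℝ := max (Z/α) 1 with hx₀def
  have hx₀1 : (1:ℝ) ≤ x₀ := le_max_right _ _
  apply strictAntiOn_of_deriv_neg (convex_Ici x₀) (q_continuousOn (by linarith))
  intro x hx
  rw [interior_Ici] at hx
  have hx1 : 1 ≤ x := le_trans hx₀1 hx.le
  have hx0 : (0:ℝ) < 1 + x := by linarith
  have hzZ : Z ≤ α * x := by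
    have h1 : Z/α < x := lt_of_le_of_lt (le_max_left _ _) hx
    rw [div_lt_iff₀ hα] at h1
    linarith [h1]
  have hsign := hZ (α*x) hzZ
  have hg := (sign_transfer hα hx1).2 hsign
  rw [(hasDerivAt_q α hx0).deriv]
  rw [num_eq hx0]
  have hs : (0:ℝ) < Real.sqrt (1+x) := Real.sqrt_pos.2 hx0
  apply div_neg_of_neg_of_pos
  · apply div_neg_of_neg_of_pos hg
    positivity
  · positivity

end LagAux

lemma Lhalf_eq_L : Lhalf = LagAux.L := by
  funext z
  rw [Lhalf, LagAux.L]
  apply tsum_congr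
  intro n
  rw [LagAux.c, neg_pow]
  ring

/-- Eventual monotonicity of `q(α,x) = L(αx)/√(1+x)`: strictly increasing on some `[x₀,∞)`
when `α > 1/2`, strictly decreasing on some `[x₀,∞)` when `0 < α < 1/2`. -/
theorem q_eventual_monotonicity (α : ℝ) (hα : 0 < α)
    (q : ℝ → ℝ) (hq : q = fun x => Lhalf (α * x) / Real.sqrt (1 + x)) :
    (1 / 2 < α → ∃ x₀ : ℝ, 0 ≤ x₀ ∧ StrictMonoOn q (Set.Ici x₀)) ∧
    (α < 1 / 2 → ∃ x₀ : ℝ, 0 ≤ x₀ ∧ StrictAntiOn q (Set.Ici x₀)) := by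
  have hqL : q = fun x => LagAux.L (α * x) / Real.sqrt (1 + x) := by
    rw [hq, Lhalf_eq_L]
  constructor
  · intro hhalf
    have hG := LagAux.tendsto_G α
    have hev : ∀ᶠ z in Filter.atTop, 0 < (α + z) * LagAux.DD z / LagAux.L z + α :=
      hG.eventually (eventually_gt_nhds (by linarith))
    obtain ⟨Z, hZ⟩ := hev.exists_forall_of_atTop
    refine ⟨max (Z/α) 1, by positivity, ?_⟩
    rw [hqL]
    exact LagAux.main_mono hα hZ
  · intro hhalf
    have hG := LagAux.tendsto_G α
    have hev : ∀ᶠ z in Filter.atTop, (α + z) * LagAux.DD z / LagAux.L z + α < 0 :=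
      hG.eventually (eventually_lt_nhds (by linarith))
    obtain ⟨Z, hZ⟩ := hev.exists_forall_of_atTop
    refine ⟨max (Z/α) 1, by positivity, ?_⟩
    rw [hqL]
    exact LagAux.main_anti hα hZ
end
end

section
/- Let β_d, β_br, β_ru, τ̄ > 0, M > 0 and c ≥ 0 be real constants. For N ∈ ℕ define E_fav(N) = (β_d·M + N·√(M·π)·√(β_d β_br β_ru) + β_br·β_ru·M·N²)·τ̄ and E_unfav(N) = (β_d·M + N·√π·c·√(β_d β_br β_ru) + β_br·β_ru·M·(N + π·N(N−1)/4))·τ̄. Then (E_fav(N) − E_unfav(N))/E_unfav(N) → (4−π)/π as N → ∞. -/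
open Filter

noncomputable section

/-- Quadratic-over-`N²` limit. -/
lemma quad_div_sq_limit (a b c : ℝ) :
    Tendsto (fun N : ℕ => (a + b * (N : ℝ) + c * (N : ℝ) ^ 2) / (N : ℝ) ^ 2) atTop
      (nhds c) := by
  have hN : Tendsto (fun N : ℕ => (N : ℝ)) atTop atTop := tendsto_natCast_atTop_atTop
  have h1 : Tendsto (fun N : ℕ => (N : ℝ)⁻¹) atTop (nhds 0) := hN.inv_tendsto_atTop
  have h2 : Tendsto (fun N : ℕ => a * ((N : ℝ)⁻¹ * (N : ℝ)⁻¹) + b * (N : ℝ)⁻¹ + c)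
      atTop (nhds (a * (0 * 0) + b * 0 + c)) := by
    exact (((tendsto_const_nhds.mul (h1.mul h1)).add (tendsto_const_nhds.mul h1)).add
      tendsto_const_nhds)
  have h2' : Tendsto (fun N : ℕ => a * ((N : ℝ)⁻¹ * (N : ℝ)⁻¹) + b * (N : ℝ)⁻¹ + c)
      atTop (nhds c) := by simpa using h2
  refine h2'.congr' ?_
  filter_upwards [eventually_gt_atTop 0] with N hNpos
  have hne : (N : ℝ) ≠ 0 := Nat.cast_ne_zero.mpr hNpos.ne'
  field_simp

/-- The relative gain in mean SNR when moving from the unfavourable to the favourable channel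
scenario tends to `(4-π)/π` as the number of RIS elements `N → ∞`. -/
theorem relative_gain_limit
    (βd βbr βru τ M : ℝ) (hβd : 0 < βd) (hβbr : 0 < βbr) (hβru : 0 < βru)
    (hτ : 0 < τ) (hM : 0 < M) (c : ℝ) (hc : 0 ≤ c)
    (Efav Eunfav : ℕ → ℝ)
    (hEfav : Efav = fun N : ℕ =>
      (βd * M + (N : ℝ) * Real.sqrt (M * Real.pi) * Real.sqrt (βd * βbr * βru)
        + βbr * βru * M * (N : ℝ) ^ 2) * τ)
    (hEunfav : Eunfav = fun N : ℕ =>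
      (βd * M + (N : ℝ) * Real.sqrt Real.pi * c * Real.sqrt (βd * βbr * βru)
        + βbr * βru * M * ((N : ℝ) + Real.pi * (N : ℝ) * ((N : ℝ) - 1) / 4)) * τ) :
    Tendsto (fun N : ℕ => (Efav N - Eunfav N) / Eunfav N) atTop
      (nhds ((4 - Real.pi) / Real.pi)) := by
  set B := βbr * βru * M with hB
  have hBpos : 0 < B := by positivity
  set s := Real.sqrt (βd * βbr * βru)
  -- numerator coefficients
  set a1 : ℝ := 0
  set b1 : ℝ := (Real.sqrt (M * Real.pi) - Real.sqrt Real.pi * c) * s * τ - B * τ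
      + B * Real.pi / 4 * τ
  set c1 : ℝ := B * τ - B * Real.pi / 4 * τ
  set a2 : ℝ := βd * M * τ
  set b2 : ℝ := Real.sqrt Real.pi * c * s * τ + B * τ - B * Real.pi / 4 * τ
  set c2 : ℝ := B * Real.pi / 4 * τ
  have hnum : ∀ N : ℕ, Efav N - Eunfav N = a1 + b1 * (N : ℝ) + c1 * (N : ℝ) ^ 2 := by
    intro N
    simp only [hEfav, hEunfav, a1, b1, c1, hB, s]
    ring
  have hden : ∀ N : ℕ, Eunfav N = a2 + b2 * (N : ℝ) + c2 * (N : ℝ) ^ 2 := by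
    intro N
    simp only [hEunfav, a2, b2, c2, hB, s]
    ring
  have hc2 : c2 ≠ 0 := by
    have := Real.pi_pos
    simp only [c2]
    positivity
  have hT1 := quad_div_sq_limit a1 b1 c1
  have hT2 := quad_div_sq_limit a2 b2 c2
  have hdiv := hT1.div hT2 hc2
  have hval : c1 / c2 = (4 - Real.pi) / Real.pi := by
    have hpi := Real.pi_ne_zero
    have hB0 : B ≠ 0 := hBpos.ne'
    have hτ0 : τ ≠ 0 := hτ.ne'
    simp only [c1, c2]
    field_simp
  rw [← hval]
  refine hdiv.congr' ?_
  filter_upwards [eventually_gt_atTop 0] with N hNpos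
  have hne : ((N : ℝ) ^ 2) ≠ 0 := by
    have : (N : ℝ) ≠ 0 := Nat.cast_ne_zero.mpr hNpos.ne'
    positivity
  simp only [Pi.div_apply]
  rw [hnum, hden]
  exact div_div_div_cancel_right₀ hne _ _
end
end
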